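/- arXiv:1504.06461 — 6 statements merged into one kernel-verified Lean document; each statement's English description precedes it below -/
import Mathlib

section
/- Define ξ_c(α̂, α*, θ̃, τ, a) = cos(α̂ + a sin τ)·cos(α*)·cos(θ̃ + a cos τ) + sin(α̂ + a sin τ)·sin(α*). Then the average (1/(2π))∫₀^{2π} ξ_c dτ equals J0(√2 a)·cos(α*)·cos(α̂)·cos(θ̃) + J0(a)·sin(α*)·sin(α̂). -/
open Real intervalIntegral

/-- Bessel function of the first kind of order 0 (integral representation). -/
noncomputable def J0 (x : ℝ) : ℝ := (1 / π) * ∫ t in (0:ℝ)..π, Real.cos (x * Real.sin t)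

lemma intC (x : ℝ) : ∫ τ in (0:ℝ)..(2*π), Real.cos (x * Real.sin τ) =
    2 * π * J0 x := by
  have h1 : ∫ τ in (0:ℝ)..π, Real.cos (x * Real.sin (τ + π)) =
      ∫ τ in (0:ℝ)..π, Real.cos (x * Real.sin τ) := by
    apply intervalIntegral.integral_congr
    intro τ _
    simp [Real.sin_add_pi]
  have h2 : ∫ τ in (0:ℝ)..π, Real.cos (x * Real.sin (τ + π)) =
      ∫ τ in π..(2*π), Real.cos (x * Real.sin τ) := by
    rw [intervalIntegral.integral_comp_add_right (fun τ => Real.cos (x * Real.sin τ)) π]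
    norm_num [two_mul]
  have hsplit : ∫ τ in (0:ℝ)..(2*π), Real.cos (x * Real.sin τ) =
      (∫ τ in (0:ℝ)..π, Real.cos (x * Real.sin τ)) +
      ∫ τ in π..(2*π), Real.cos (x * Real.sin τ) := by
    rw [intervalIntegral.integral_add_adjacent_intervals] <;>
      exact (Continuous.intervalIntegrable (by fun_prop) _ _)
  rw [hsplit, ← h2, h1, J0]
  have : π ≠ 0 := Real.pi_ne_zero
  field_simp
  ring

lemma intS (x : ℝ) : ∫ τ in (0:ℝ)..(2*π), Real.sin (x * Real.sin τ) = 0 := by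
  have h1 : ∫ τ in (0:ℝ)..π, Real.sin (x * Real.sin (τ + π)) =
      ∫ τ in (0:ℝ)..π, -Real.sin (x * Real.sin τ) := by
    apply intervalIntegral.integral_congr
    intro τ _
    simp [Real.sin_add_pi]
  have h2 : ∫ τ in (0:ℝ)..π, Real.sin (x * Real.sin (τ + π)) =
      ∫ τ in π..(2*π), Real.sin (x * Real.sin τ) := by
    rw [intervalIntegral.integral_comp_add_right (fun τ => Real.sin (x * Real.sin τ)) π]
    norm_num [two_mul]
  have hsplit : ∫ τ in (0:ℝ)..(2*π), Real.sin (x * Real.sin τ) =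
      (∫ τ in (0:ℝ)..π, Real.sin (x * Real.sin τ)) +
      ∫ τ in π..(2*π), Real.sin (x * Real.sin τ) := by
    rw [intervalIntegral.integral_add_adjacent_intervals] <;>
      exact (Continuous.intervalIntegrable (by fun_prop) _ _)
  rw [hsplit, ← h2, h1]
  simp

lemma intCos (c x : ℝ) : ∫ τ in (0:ℝ)..(2*π), Real.cos (c + x * Real.sin τ) =
    2 * π * J0 x * Real.cos c := by
  have : ∀ τ : ℝ, Real.cos (c + x * Real.sin τ) =
      Real.cos c * Real.cos (x * Real.sin τ) - Real.sin c * Real.sin (x * Real.sin τ) := by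
    intro τ; rw [Real.cos_add]
  simp_rw [this]
  rw [intervalIntegral.integral_sub, intervalIntegral.integral_const_mul,
    intervalIntegral.integral_const_mul, intC, intS]
  · ring
  · exact (Continuous.intervalIntegrable (by fun_prop) _ _)
  · exact (Continuous.intervalIntegrable (by fun_prop) _ _)

lemma intCosShift (c x s : ℝ) : ∫ τ in (0:ℝ)..(2*π), Real.cos (c + x * Real.sin (τ + s)) =
    2 * π * J0 x * Real.cos c := by
  rw [intervalIntegral.integral_comp_add_right (fun τ => Real.cos (c + x * Real.sin τ)) s]
  have hper : Function.Periodic (fun τ => Real.cos (c + x * Real.sin τ)) (2 * π) := by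
    intro τ; simp [Real.sin_add_two_pi]
  have := hper.intervalIntegral_add_eq s 0
  simp only [zero_add] at this
  rw [show (0:ℝ) + s = s by ring, show 2 * π + s = s + 2 * π by ring, this, intCos]

theorem xi_c_average (a αhat αstar θtilde : ℝ) :
    (1 / (2 * π)) * ∫ τ in (0:ℝ)..(2 * π),
        (Real.cos (αhat + a * Real.sin τ) * Real.cos αstar *
            Real.cos (θtilde + a * Real.cos τ) +
          Real.sin (αhat + a * Real.sin τ) * Real.sin αstar)
      = J0 (Real.sqrt 2 * a) * Real.cos αstar * Real.cos αhat * Real.cos θtilde +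
          J0 a * Real.sin αstar * Real.sin αhat := by
  have sqrt2 : Real.sqrt 2 * Real.sqrt 2 = 2 := Real.mul_self_sqrt (by norm_num)
  have key : ∀ τ : ℝ,
      Real.cos (αhat + a * Real.sin τ) * Real.cos αstar * Real.cos (θtilde + a * Real.cos τ) +
        Real.sin (αhat + a * Real.sin τ) * Real.sin αstar =
      (Real.cos αstar / 2) * Real.cos ((αhat + θtilde) + (Real.sqrt 2 * a) * Real.sin (τ + π/4)) +
      ((Real.cos αstar / 2) * Real.cos ((αhat - θtilde) + (Real.sqrt 2 * a) * Real.sin (τ + (-(π/4)))) +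
      Real.sin αstar * Real.cos ((αhat - π/2) + a * Real.sin τ)) := by
    intro τ
    have e1 : Real.sqrt 2 * Real.sin (τ + π/4) = Real.sin τ + Real.cos τ := by
      rw [Real.sin_add, Real.cos_pi_div_four, Real.sin_pi_div_four]
      linear_combination ((Real.sin τ + Real.cos τ)/2) * sqrt2
    have e2 : Real.sqrt 2 * Real.sin (τ + (-(π/4))) = Real.sin τ - Real.cos τ := by
      rw [Real.sin_add, Real.sin_neg, Real.cos_neg, Real.cos_pi_div_four, Real.sin_pi_div_four]
      linear_combination ((Real.sin τ - Real.cos τ)/2) * sqrt2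
    have h1 : (αhat + θtilde) + (Real.sqrt 2 * a) * Real.sin (τ + π/4) =
        (αhat + a * Real.sin τ) + (θtilde + a * Real.cos τ) := by
      linear_combination a * e1
    have h2 : (αhat - θtilde) + (Real.sqrt 2 * a) * Real.sin (τ + (-(π/4))) =
        (αhat + a * Real.sin τ) - (θtilde + a * Real.cos τ) := by
      linear_combination a * e2
    have hY : Real.cos ((αhat - π/2) + a * Real.sin τ) = Real.sin (αhat + a * Real.sin τ) := by
      rw [show (αhat - π/2) + a * Real.sin τ = (αhat + a * Real.sin τ) - π/2 by ring,
        Real.cos_sub_pi_div_two]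
    rw [h1, h2, hY, Real.cos_add (αhat + a * Real.sin τ), Real.cos_sub (αhat + a * Real.sin τ)]
    ring
  rw [intervalIntegral.integral_congr (fun τ _ => key τ)]
  rw [intervalIntegral.integral_add, intervalIntegral.integral_add,
    intervalIntegral.integral_const_mul, intervalIntegral.integral_const_mul,
    intervalIntegral.integral_const_mul, intCosShift, intCosShift]
  · have h3 : ∫ τ in (0:ℝ)..(2*π), Real.cos ((αhat - π/2) + a * Real.sin τ) =
        2 * π * J0 a * Real.cos (αhat - π/2) := intCos _ _
    rw [h3, Real.cos_sub_pi_div_two, Real.cos_add, Real.cos_sub]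
    have : π ≠ 0 := Real.pi_ne_zero
    field_simp
    ring
  · exact (Continuous.intervalIntegrable (by fun_prop) _ _)
  · exact (Continuous.intervalIntegrable (by fun_prop) _ _)
  · exact (Continuous.intervalIntegrable (by fun_prop) _ _)
  · exact (Continuous.intervalIntegrable (by fun_prop) _ _)
end

section
/- Define ξ_c as in the averaged system: ξ_c(τ) = cos(α̂ + a sin τ)·cos(α*)·cos(θ̃ + a cos τ) + sin(α̂ + a sin τ)·sin(α*). At α* = 0, α̂ = 0, the average of ξ_c(τ)·sin(τ) over [0,2π] equals 0 and the average of ξ_c(τ)·cos(τ) over [0,2π] equals −(J1(√2 a)/√2)·sin(θ̃). -/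
open Real

/-- Bessel function of the first kind of order 1 (integral representation). -/
noncomputable def J1 (x : ℝ) : ℝ := (1 / π) * ∫ t in (0:ℝ)..π, Real.cos (t - x * Real.sin t)

-- FTC lemmas
lemma ftc_cos (s b c : ℝ) (hb : Real.sin b = 0) (hc : Real.sin c = 0) :
    ∫ t in b..c, Real.cos (s * Real.sin t) * Real.cos t = 0 := by
  rcases eq_or_ne s 0 with rfl | hs
  · simp [integral_cos, hb, hc]
  · have h : ∀ t : ℝ, HasDerivAt (fun t => Real.sin (s * Real.sin t) / s)
        (Real.cos (s * Real.sin t) * Real.cos t) t := by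
      intro t
      have h1 : HasDerivAt (fun t : ℝ => s * Real.sin t) (s * Real.cos t) t :=
        (Real.hasDerivAt_sin t).const_mul s
      have h2 := ((Real.hasDerivAt_sin (s * Real.sin t)).comp t h1).div_const s
      refine h2.congr_deriv ?_
      rw [div_eq_iff hs]
      ring
    rw [intervalIntegral.integral_eq_sub_of_hasDerivAt (fun t _ => h t)
        (Continuous.intervalIntegrable (by fun_prop) b c)]
    simp [hb, hc]

lemma ftc_sin (s b c : ℝ) (hb : Real.sin b = 0) (hc : Real.sin c = 0) :
    ∫ t in b..c, Real.sin (s * Real.sin t) * Real.cos t = 0 := by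
  rcases eq_or_ne s 0 with rfl | hs
  · simp
  · have h : ∀ t : ℝ, HasDerivAt (fun t => -Real.cos (s * Real.sin t) / s)
        (Real.sin (s * Real.sin t) * Real.cos t) t := by
      intro t
      have h1 : HasDerivAt (fun t : ℝ => s * Real.sin t) (s * Real.cos t) t :=
        (Real.hasDerivAt_sin t).const_mul s
      have h2 := (((Real.hasDerivAt_cos (s * Real.sin t)).comp t h1).neg).div_const s
      refine h2.congr_deriv ?_
      rw [div_eq_iff hs]
      ring
    rw [intervalIntegral.integral_eq_sub_of_hasDerivAt (fun t _ => h t)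
        (Continuous.intervalIntegrable (by fun_prop) b c)]
    simp [hb, hc]

lemma sinpart (s : ℝ) : ∫ t in (0:ℝ)..π, Real.sin (s * Real.sin t) * Real.sin t = π * J1 s := by
  have hkey : ∀ t : ℝ, Real.cos (t - s * Real.sin t)
      = Real.cos (s * Real.sin t) * Real.cos t + Real.sin (s * Real.sin t) * Real.sin t := by
    intro t; rw [Real.cos_sub]; ring
  have hsplit : ∫ t in (0:ℝ)..π, Real.cos (t - s * Real.sin t)
      = (∫ t in (0:ℝ)..π, Real.cos (s * Real.sin t) * Real.cos t)
        + ∫ t in (0:ℝ)..π, Real.sin (s * Real.sin t) * Real.sin t := by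
    rw [← intervalIntegral.integral_add
      ((show Continuous fun t => Real.cos (s * Real.sin t) * Real.cos t by
        fun_prop).intervalIntegrable 0 π)
      ((show Continuous fun t => Real.sin (s * Real.sin t) * Real.sin t by
        fun_prop).intervalIntegrable 0 π)]
    exact intervalIntegral.integral_congr fun t _ => hkey t
  rw [J1, hsplit, ftc_cos s 0 π (by simp) (by simp)]
  field_simp
  ring

lemma Kval (s : ℝ) : ∫ t in (0:ℝ)..(2*π), Real.sin (s * Real.sin t) * Real.sin t
    = 2 * π * J1 s := by
  have hint : ∀ u v : ℝ, IntervalIntegrable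
      (fun t => Real.sin (s * Real.sin t) * Real.sin t) MeasureTheory.volume u v := fun u v =>
    ((Real.continuous_sin.comp (continuous_const.mul Real.continuous_sin)).mul
      Real.continuous_sin).intervalIntegrable u v
  have hsplit := intervalIntegral.integral_add_adjacent_intervals (hint 0 π) (hint π (2*π))
  have h2 : (∫ t in π..(2*π), Real.sin (s * Real.sin t) * Real.sin t)
      = ∫ t in (0:ℝ)..π, Real.sin (s * Real.sin t) * Real.sin t := by
    have hc : (∫ t in (0:ℝ)..π, Real.sin (s * Real.sin (t + π)) * Real.sin (t + π))
        = ∫ t in (0+π:ℝ)..(π+π), Real.sin (s * Real.sin t) * Real.sin t :=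
      intervalIntegral.integral_comp_add_right
        (fun t => Real.sin (s * Real.sin t) * Real.sin t) π
    have hb : (0+π:ℝ) = π := by ring
    have hb2 : (π+π:ℝ) = 2*π := by ring
    rw [hb, hb2] at hc
    rw [← hc]
    apply intervalIntegral.integral_congr
    intro t _
    simp [Real.sin_add_pi]
  rw [← hsplit, h2, sinpart]
  ring

lemma per_shift {f : ℝ → ℝ} (hf : Function.Periodic f (2*π)) (t : ℝ) :
    (∫ x in t..(t + 2*π), f x) = ∫ x in (0:ℝ)..(2*π), f x := by
  simpa using hf.intervalIntegral_add_eq t 0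


lemma cont_ii (f : ℝ → ℝ) (hf : Continuous f) (u v : ℝ) :
    IntervalIntegrable f MeasureTheory.volume u v := hf.intervalIntegrable u v

lemma A_zero (a : ℝ) :
    ∫ τ in (0:ℝ)..(2*π), Real.cos (a * Real.sin τ) * Real.cos (a * Real.cos τ) * Real.cos τ
      = 0 := by
  set g : ℝ → ℝ := fun τ => Real.cos (a * Real.sin τ) * Real.cos (a * Real.cos τ) * Real.cos τ
    with hg
  have hper : Function.Periodic g (2*π) := by
    intro x; simp [hg, Real.sin_add_two_pi, Real.cos_add_two_pi]
  have h1 : (∫ x in (0:ℝ)..(2*π), g (π - x)) = ∫ x in (π - 2*π)..(π - 0), g x :=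
    intervalIntegral.integral_comp_sub_left g π
  have h2 : (∫ x in (π - 2*π)..(π - 0), g x) = ∫ x in (0:ℝ)..(2*π), g x := by
    rw [show (π - 2*π : ℝ) = -π by ring, show (π - 0 : ℝ) = -π + 2*π by ring]
    exact per_shift hper (-π)
  have h3 : (∫ x in (0:ℝ)..(2*π), g (π - x)) = -∫ x in (0:ℝ)..(2*π), g x := by
    rw [show (fun x => g (π - x)) = fun x => -g x by
      funext x
      simp only [hg, Real.sin_pi_sub, Real.cos_pi_sub, mul_neg, Real.cos_neg]
      try ring, intervalIntegral.integral_neg]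
  have h4 := h1.trans h2
  rw [h3] at h4
  linarith

lemma fold (a : ℝ) :
    (∫ τ in (0:ℝ)..(2*π), Real.sin (a * Real.cos τ - a * Real.sin τ) * Real.cos τ)
      = ∫ τ in (0:ℝ)..(2*π), Real.sin (a * Real.cos τ + a * Real.sin τ) * Real.cos τ := by
  set h : ℝ → ℝ := fun τ => Real.sin (a * Real.cos τ + a * Real.sin τ) * Real.cos τ with hh
  have hper : Function.Periodic h (2*π) := by
    intro x; simp [hh, Real.sin_add_two_pi, Real.cos_add_two_pi]
  have h0 : (fun x => Real.sin (a * Real.cos x - a * Real.sin x) * Real.cos x)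
      = fun x => h (-x) := by
    funext x
    simp only [hh, Real.sin_neg, Real.cos_neg, mul_neg, ← sub_eq_add_neg]
  have h1 : (∫ x in (0:ℝ)..(2*π), h (-x)) = ∫ x in (-(2*π):ℝ)..(-0:ℝ), h x :=
    intervalIntegral.integral_comp_neg h
  have h2 : (∫ x in (-(2*π):ℝ)..(-0:ℝ), h x) = ∫ x in (0:ℝ)..(2*π), h x := by
    rw [show (-0 : ℝ) = -(2*π) + 2*π by ring]
    exact per_shift hper (-(2*π))
  calc (∫ τ in (0:ℝ)..(2*π), Real.sin (a * Real.cos τ - a * Real.sin τ) * Real.cos τ)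
      = ∫ x in (0:ℝ)..(2*π), h (-x) := by rw [h0]
    _ = ∫ x in (0:ℝ)..(2*π), h x := h1.trans h2

lemma Dval (a : ℝ) :
    (∫ τ in (0:ℝ)..(2*π), Real.sin (a * Real.cos τ + a * Real.sin τ) * Real.cos τ)
      = Real.sqrt 2 * π * J1 (Real.sqrt 2 * a) := by
  have hs2 : Real.sqrt 2 * Real.sqrt 2 = 2 := Real.mul_self_sqrt (by norm_num)
  set s : ℝ := Real.sqrt 2 * a with hsdef
  set p : ℝ → ℝ := fun u => Real.sin (s * Real.sin u) * Real.cos (u - π/4) with hp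
  have hper : Function.Periodic p (2*π) := by
    intro x
    simp only [hp]
    rw [show x + 2*π - π/4 = x - π/4 + 2*π by ring]
    simp [Real.sin_add_two_pi, Real.cos_add_two_pi]
  have h0 : (fun τ => Real.sin (a * Real.cos τ + a * Real.sin τ) * Real.cos τ)
      = fun τ => p (τ + π/4) := by
    funext τ
    simp only [hp]
    have harg : s * Real.sin (τ + π/4) = a * Real.cos τ + a * Real.sin τ := by
      rw [Real.sin_add, Real.cos_pi_div_four, Real.sin_pi_div_four, hsdef]
      linear_combination (a * (Real.sin τ + Real.cos τ) / 2) * hs2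
    rw [add_sub_cancel_right, harg]
  have h1 : (∫ x in (0:ℝ)..(2*π), p (x + π/4)) = ∫ x in (0 + π/4 : ℝ)..(2*π + π/4), p x :=
    intervalIntegral.integral_comp_add_right p (π/4)
  have h2 : (∫ x in (0 + π/4 : ℝ)..(2*π + π/4), p x) = ∫ x in (0:ℝ)..(2*π), p x := by
    rw [zero_add, show (2*π + π/4 : ℝ) = π/4 + 2*π by ring]
    exact per_shift hper (π/4)
  have h3 : (∫ x in (0:ℝ)..(2*π), p x)
      = (Real.sqrt 2/2) * (∫ x in (0:ℝ)..(2*π), Real.sin (s * Real.sin x) * Real.cos x)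
        + (Real.sqrt 2/2) * ∫ x in (0:ℝ)..(2*π), Real.sin (s * Real.sin x) * Real.sin x := by
    rw [← intervalIntegral.integral_const_mul, ← intervalIntegral.integral_const_mul,
      ← intervalIntegral.integral_add
        (cont_ii (fun x => Real.sqrt 2/2 * (Real.sin (s * Real.sin x) * Real.cos x))
          (by fun_prop) 0 (2*π))
        (cont_ii (fun x => Real.sqrt 2/2 * (Real.sin (s * Real.sin x) * Real.sin x))
          (by fun_prop) 0 (2*π))]
    apply intervalIntegral.integral_congr
    intro x _
    simp only [hp]
    rw [Real.cos_sub, Real.cos_pi_div_four, Real.sin_pi_div_four]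
    ring
  rw [h0, h1, h2, h3, ftc_sin s 0 (2*π) (by simp) (by simp [Real.sin_two_pi]), Kval]
  ring

lemma Bval (a : ℝ) :
    (∫ τ in (0:ℝ)..(2*π), Real.cos (a * Real.sin τ) * Real.sin (a * Real.cos τ) * Real.cos τ)
      = Real.sqrt 2 * π * J1 (Real.sqrt 2 * a) := by
  have hpt : ∀ τ : ℝ, Real.cos (a * Real.sin τ) * Real.sin (a * Real.cos τ) * Real.cos τ
      = (1/2) * (Real.sin (a * Real.cos τ + a * Real.sin τ) * Real.cos τ)
        + (1/2) * (Real.sin (a * Real.cos τ - a * Real.sin τ) * Real.cos τ) := by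
    intro τ
    rw [Real.sin_add, Real.sin_sub]
    ring
  have hsplit : (∫ τ in (0:ℝ)..(2*π),
        Real.cos (a * Real.sin τ) * Real.sin (a * Real.cos τ) * Real.cos τ)
      = (1/2) * (∫ τ in (0:ℝ)..(2*π), Real.sin (a * Real.cos τ + a * Real.sin τ) * Real.cos τ)
        + (1/2) * ∫ τ in (0:ℝ)..(2*π), Real.sin (a * Real.cos τ - a * Real.sin τ) * Real.cos τ := by
    rw [← intervalIntegral.integral_const_mul, ← intervalIntegral.integral_const_mul,
      ← intervalIntegral.integral_add
        (cont_ii (fun τ => (1/2) * (Real.sin (a * Real.cos τ + a * Real.sin τ) * Real.cos τ))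
          (by fun_prop) 0 (2*π))
        (cont_ii (fun τ => (1/2) * (Real.sin (a * Real.cos τ - a * Real.sin τ) * Real.cos τ))
          (by fun_prop) 0 (2*π))]
    exact intervalIntegral.integral_congr fun τ _ => hpt τ
  rw [hsplit, fold, Dval]
  ring

theorem xi_c_demodulation_averages_inplane (a θtilde : ℝ) :
    let ξc : ℝ → ℝ := fun τ =>
      Real.cos ((0:ℝ) + a * Real.sin τ) * Real.cos (0:ℝ) *
          Real.cos (θtilde + a * Real.cos τ) +
        Real.sin ((0:ℝ) + a * Real.sin τ) * Real.sin (0:ℝ)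
    ((1 / (2 * π)) * ∫ τ in (0:ℝ)..(2 * π), ξc τ * Real.sin τ) = 0 ∧
    ((1 / (2 * π)) * ∫ τ in (0:ℝ)..(2 * π), ξc τ * Real.cos τ)
      = -(J1 (Real.sqrt 2 * a) / Real.sqrt 2) * Real.sin θtilde := by
  intro ξc
  have hξ : ∀ τ, ξc τ = Real.cos (a * Real.sin τ) * Real.cos (θtilde + a * Real.cos τ) := by
    intro τ; simp [ξc]
  constructor
  · -- sin average is 0
    have hper : Function.Periodic
        (fun τ => Real.cos (a * Real.sin τ) * Real.cos (θtilde + a * Real.cos τ) * Real.sin τ)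
        (2*π) := by
      intro x; simp [Real.sin_add_two_pi, Real.cos_add_two_pi]
    set f : ℝ → ℝ :=
      fun τ => Real.cos (a * Real.sin τ) * Real.cos (θtilde + a * Real.cos τ) * Real.sin τ
      with hf
    have hI : (∫ τ in (0:ℝ)..(2*π), ξc τ * Real.sin τ) = ∫ τ in (0:ℝ)..(2*π), f τ := by
      apply intervalIntegral.integral_congr
      intro τ _
      simp only [hξ, hf]
    have h1 : (∫ x in (0:ℝ)..(2*π), f (-x)) = ∫ x in (-(2*π):ℝ)..(-0:ℝ), f x :=
      intervalIntegral.integral_comp_neg f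
    have h2 : (∫ x in (-(2*π):ℝ)..(-0:ℝ), f x) = ∫ x in (0:ℝ)..(2*π), f x := by
      have := per_shift hper (-(2*π))
      rw [show (-(2*π) + 2*π : ℝ) = -0 by ring] at this
      exact this
    have h3 : (∫ x in (0:ℝ)..(2*π), f (-x)) = -∫ x in (0:ℝ)..(2*π), f x := by
      rw [show (fun x => f (-x)) = fun x => -f x by
        funext x; simp [hf, Real.sin_neg, Real.cos_neg, mul_neg],
        intervalIntegral.integral_neg]
    have h4 := h1.trans h2
    rw [h3] at h4
    have h5 : (∫ x in (0:ℝ)..(2*π), f x) = 0 := by linarith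
    rw [hI, h5, mul_zero]
  · -- cos average
    have hI : (∫ τ in (0:ℝ)..(2*π), ξc τ * Real.cos τ)
        = ∫ τ in (0:ℝ)..(2*π),
            Real.cos (a * Real.sin τ) * Real.cos (θtilde + a * Real.cos τ) * Real.cos τ := by
      apply intervalIntegral.integral_congr
      intro τ _
      simp only [hξ]
    have hsplit : (∫ τ in (0:ℝ)..(2*π),
          Real.cos (a * Real.sin τ) * Real.cos (θtilde + a * Real.cos τ) * Real.cos τ)
        = Real.cos θtilde * (∫ τ in (0:ℝ)..(2*π),
              Real.cos (a * Real.sin τ) * Real.cos (a * Real.cos τ) * Real.cos τ)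
          - Real.sin θtilde * ∫ τ in (0:ℝ)..(2*π),
              Real.cos (a * Real.sin τ) * Real.sin (a * Real.cos τ) * Real.cos τ := by
      rw [← intervalIntegral.integral_const_mul, ← intervalIntegral.integral_const_mul,
        ← intervalIntegral.integral_sub
          (cont_ii (fun τ => Real.cos θtilde *
              (Real.cos (a * Real.sin τ) * Real.cos (a * Real.cos τ) * Real.cos τ))
            (by fun_prop) 0 (2*π))
          (cont_ii (fun τ => Real.sin θtilde *
              (Real.cos (a * Real.sin τ) * Real.sin (a * Real.cos τ) * Real.cos τ))
            (by fun_prop) 0 (2*π))]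
      apply intervalIntegral.integral_congr
      intro τ _
      simp only [Real.cos_add]
      ring
    rw [hI, hsplit, A_zero, Bval]
    have hπ : (π : ℝ) ≠ 0 := Real.pi_ne_zero
    have hs2 : Real.sqrt 2 * Real.sqrt 2 = 2 := Real.mul_self_sqrt (by norm_num)
    have hs0 : Real.sqrt 2 ≠ 0 := by positivity
    field_simp
    ring_nf
    linear_combination (-π * Real.sin θtilde * J1 (Real.sqrt 2 * a)) * hs2
end

section
/- Suppose sin θ ≠ 0 and the equilibrium equations of the averaged system (with α* = α̂ = 0) hold: η/r = −b q R·[(J0(2√2 a)+J0(2a))·cos 2θ + J0(2a)+1]/(2 J0(√2 a) cos θ) and 0 = −√2 cθ q R r J1(√2 a) + (η/r)·J0(√2 a) + b q R (J0(2√2 a)+J0(2a))·cos θ, where η = Vc − b q r² − b e. Then r·cos θ = −ρ2 with ρ2 = √2·b·(1 − J0(2√2 a))/(4 cθ J1(√2 a)), assuming all denominators are nonzero. -/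
open Real

theorem revolving_equilibrium_radius (Vc b q R cθ a r θ e : ℝ)
    (hVc : 0 < Vc) (hb : 0 < b) (hq : 0 < q) (hR : 0 < R) (hcθ : 0 < cθ) (ha : 0 < a)
    (hr : 0 < r)
    (hsin : Real.sin θ ≠ 0) (hcos : Real.cos θ ≠ 0)
    (hJ0 : J0 (Real.sqrt 2 * a) ≠ 0) (hJ1 : J1 (Real.sqrt 2 * a) ≠ 0)
    (η : ℝ) (hη : η = Vc - b * q * r^2 - b * e)
    (heq1 : η / r =
      -(b * q * R *
          ((J0 (2 * Real.sqrt 2 * a) + J0 (2 * a)) * Real.cos (2 * θ) + J0 (2 * a) + 1)) /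
        (2 * J0 (Real.sqrt 2 * a) * Real.cos θ))
    (heq2 : 0 = -(Real.sqrt 2) * cθ * q * R * r * J1 (Real.sqrt 2 * a) +
      (η / r) * J0 (Real.sqrt 2 * a) +
      b * q * R * (J0 (2 * Real.sqrt 2 * a) + J0 (2 * a)) * Real.cos θ) :
    r * Real.cos θ =
      -(Real.sqrt 2 * b * (1 - J0 (2 * Real.sqrt 2 * a)) /
          (4 * cθ * J1 (Real.sqrt 2 * a))) := by
  rw [heq1, Real.cos_two_mul] at heq2
  have hs : Real.sqrt 2 * Real.sqrt 2 = 2 := Real.mul_self_sqrt (by norm_num)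
  have hcθ' : cθ ≠ 0 := ne_of_gt hcθ
  have hq' : q ≠ 0 := ne_of_gt hq
  have hR' : R ≠ 0 := ne_of_gt hR
  field_simp at heq2 ⊢
  rw [show Real.sqrt 2 * a * 2 = 2 * Real.sqrt 2 * a by ring] at heq2 ⊢
  have h0 : q * R * J0 (Real.sqrt 2 * a) ≠ 0 := by
    exact mul_ne_zero (mul_ne_zero hq' hR') hJ0
  have key : Real.sqrt 2 * cθ * r * J1 (Real.sqrt 2 * a) * Real.cos θ * 2 =
      b * (J0 (2 * Real.sqrt 2 * a) - 1) := by
    apply mul_left_cancel₀ h0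
    linear_combination J0 (Real.sqrt 2 * a) * heq2
  linear_combination Real.sqrt 2 * key - 2 * cθ * r * (J1 (Real.sqrt 2 * a)) * Real.cos θ * hs
end

section
/- Using cos 2θ = 2cos²θ − 1, if r cos θ = −ρ2 and −η·J0(√2 a)·cos θ = (b q R r/2)·[(J0(2√2 a)+J0(2a))·cos 2θ + J0(2a)+1] with η determined so that r² = 2 γ3 ρ2², then cos θ = −√(1/(2γ3)), i.e., θ = ±arccos(−√(1/(2γ3))), provided γ3 ≥ 1/2. -/
open Real

theorem revolving_equilibrium_angle (Vc b q R cθ a r θ e : ℝ)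
    (hVc : 0 < Vc) (hb : 0 < b) (hq : 0 < q) (hR : 0 < R) (hcθ : 0 < cθ) (ha : 0 < a)
    (hr : 0 < r)
    (ρ2 γ2 γ3 : ℝ)
    (hρ2def : ρ2 = Real.sqrt 2 * b * (1 - J0 (2 * Real.sqrt 2 * a)) /
        (4 * cθ * J1 (Real.sqrt 2 * a)))
    (hγ2def : γ2 = 2 * (J0 (Real.sqrt 2 * a))^2 +
        Vc * J0 (Real.sqrt 2 * a) / (b * q * R * ρ2))
    (hγ3def : γ3 = (J0 (2 * Real.sqrt 2 * a) + J0 (2 * a) - γ2) /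
        (J0 (2 * Real.sqrt 2 * a) - 1))
    (hρ2pos : 0 < ρ2) (hγ3 : γ3 ≥ 1/2)
    (η : ℝ) (hη : η = Vc - b * q * r^2 - b * e)
    (hrcos : r * Real.cos θ = -ρ2)
    (heq : -η * J0 (Real.sqrt 2 * a) * Real.cos θ =
      (b * q * R * r / 2) *
        ((J0 (2 * Real.sqrt 2 * a) + J0 (2 * a)) * Real.cos (2 * θ) + J0 (2 * a) + 1))
    (hrsq : r^2 = 2 * γ3 * ρ2^2) :
    Real.cos θ = -Real.sqrt (1 / (2 * γ3)) := by
  have hγ3pos : 0 < γ3 := by linarith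
  have hcneg : Real.cos θ < 0 := by
    nlinarith [hrcos, hrsq]
  have hsq : (Real.cos θ)^2 = 1 / (2 * γ3) := by
    have h1 : (r * Real.cos θ)^2 = ρ2^2 := by rw [hrcos]; ring
    have h2 : r^2 * (Real.cos θ)^2 = ρ2^2 := by nlinarith [h1]
    rw [hrsq] at h2
    have h3 : (Real.cos θ^2 * (2 * γ3) - 1) * ρ2^2 = 0 := by linear_combination h2
    have hρsq : ρ2^2 ≠ 0 := by positivity
    have h4 : Real.cos θ^2 * (2 * γ3) - 1 = 0 := by
      rcases mul_eq_zero.mp h3 with h | h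
      · exact h
      · exact absurd h hρsq
    field_simp
    linarith
  have : Real.sqrt (1 / (2 * γ3)) = -Real.cos θ := by
    rw [← hsq]
    rw [show (Real.cos θ)^2 = (-Real.cos θ)^2 by ring]
    exact Real.sqrt_sq (by linarith)
  linarith
end

section
/- For all a in the interval [1.75, 2.5]: J0(√2 a) < 0, J1(√2 a) > 0, 3J0(2a) − 2 < 0, and J0(2√2 a) + J0(2a) − 1 < 0. -/
open Real

open Finset Nat

private lemma fact_ratio (u : ℝ) (hu : |u| ≤ 7.2) (n : ℕ) (hn : 24 ≤ n) :
    |u| ^ (n + 2) / ((n + 2)! : ℝ) ≤ 1 / 2 * (|u| ^ n / (n ! : ℝ)) := by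
  have h1 : ((n + 2)! : ℝ) = ((n : ℝ) + 1) * ((n : ℝ) + 2) * (n ! : ℝ) := by
    push_cast [Nat.factorial_succ]
    ring
  have hf : (0:ℝ) < (n ! : ℝ) := by positivity
  have hn' : (25 : ℝ) * 26 ≤ ((n:ℝ)+1) * ((n:ℝ)+2) := by
    have : (24:ℝ) ≤ n := by exact_mod_cast hn
    nlinarith
  have hu2 : |u| ^ 2 ≤ 7.2 ^ 2 := by
    have := abs_nonneg u
    nlinarith
  have h0 : (0:ℝ) ≤ |u| ^ n := by positivity
  rw [h1, div_le_iff₀ (by positivity)]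
  have hrhs : 1 / 2 * (|u| ^ n / (n ! : ℝ)) * (((n:ℝ)+1) * ((n:ℝ)+2) * (n ! : ℝ))
      = |u| ^ n * ((((n:ℝ)+1) * ((n:ℝ)+2)) / 2) := by
    field_simp
  rw [hrhs, pow_add]
  have : |u| ^ 2 ≤ (((n:ℝ)+1) * ((n:ℝ)+2)) / 2 := by nlinarith
  nlinarith

private lemma tail_term (u : ℝ) (hu : |u| ≤ 7.2) (m : ℕ) (hm : 24 ≤ m) (i : ℕ) :
    |u| ^ (2*i + m) / ((2*i + m)! : ℝ) ≤ |u| ^ m / ((m)! : ℝ) * (1/2 : ℝ)^i := by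
  induction i with
  | zero => simp
  | succ n ih =>
    have he : 2*(n+1) + m = (2*n + m) + 2 := by ring
    rw [he]
    calc |u| ^ ((2*n+m) + 2) / (((2*n+m) + 2)! : ℝ)
        ≤ 1/2 * (|u| ^ (2*n+m) / ((2*n+m)! : ℝ)) := fact_ratio u hu _ (by omega)
      _ ≤ 1/2 * (|u| ^ m / ((m)! : ℝ) * (1/2:ℝ)^n) := by nlinarith [ih]
      _ = |u| ^ m / ((m)! : ℝ) * (1/2:ℝ)^(n+1) := by ring

private lemma cos_taylor (u : ℝ) (hu : |u| ≤ 7.2) :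
    |Real.cos u - ∑ k ∈ range 12, (-1)^k * u^(2*k) / ((2*k)! : ℝ)| ≤ 2 * (|u|^24 / ((24)! : ℝ)) := by
  set f : ℕ → ℝ := fun k => (-1)^k * u^(2*k) / ((2*k)! : ℝ) with hf
  have hsum := Real.hasSum_cos u
  have hs : Summable f := hsum.summable
  have key : Real.cos u - ∑ k ∈ range 12, f k = ∑' i, f (i + 12) := by
    have h2 := Summable.sum_add_tsum_nat_add (f := f) 12 hs
    rw [hsum.tsum_eq] at h2; linarith
  rw [key]
  have habs : ∀ i, |f (i + 12)| = |u| ^ (2*i + 24) / ((2*i + 24)! : ℝ) := by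
    intro i
    have h3 : 2 * (i + 12) = 2*i + 24 := by ring
    simp only [hf, h3, abs_div, abs_mul, abs_pow, abs_neg, abs_one, one_pow, one_mul,
      Nat.abs_cast]
  have hterm : ∀ i, |f (i+12)| ≤ |u|^24/((24)! :ℝ) * (1/2:ℝ)^i := by
    intro i
    rw [habs i]
    exact tail_term u hu 24 le_rfl i
  have hsum2 : Summable (fun i => |f (i+12)|) := ((summable_nat_add_iff 12).2 hs).abs
  have hgeo : Summable (fun i : ℕ => |u|^24/((24)! :ℝ) * (1/2:ℝ)^i) :=
    (summable_geometric_of_lt_one (by norm_num) (by norm_num)).mul_left _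
  calc |∑' i, f (i+12)| ≤ ∑' i, |f (i+12)| := by
        simpa [Real.norm_eq_abs] using norm_tsum_le_tsum_norm (f := fun i => f (i+12))
          (by simpa [Real.norm_eq_abs] using hsum2)
    _ ≤ ∑' i : ℕ, |u|^24/((24)! :ℝ) * (1/2:ℝ)^i := Summable.tsum_le_tsum hterm hsum2 hgeo
    _ = |u|^24/((24)! :ℝ) * 2 := by
        rw [tsum_mul_left, tsum_geometric_of_lt_one (by norm_num) (by norm_num)]; norm_num
    _ = 2 * (|u|^24/((24)! :ℝ)) := by ring

private lemma sin_taylor (u : ℝ) (hu : |u| ≤ 7.2) :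
    |Real.sin u - ∑ k ∈ range 12, (-1)^k * u^(2*k+1) / ((2*k+1)! : ℝ)|
      ≤ 2 * (|u|^25 / ((25)! : ℝ)) := by
  set f : ℕ → ℝ := fun k => (-1)^k * u^(2*k+1) / ((2*k+1)! : ℝ) with hf
  have hsum := Real.hasSum_sin u
  have hs : Summable f := hsum.summable
  have key : Real.sin u - ∑ k ∈ range 12, f k = ∑' i, f (i + 12) := by
    have h2 := Summable.sum_add_tsum_nat_add (f := f) 12 hs
    rw [hsum.tsum_eq] at h2; linarith
  rw [key]
  have habs : ∀ i, |f (i + 12)| = |u| ^ (2*i + 25) / ((2*i + 25)! : ℝ) := by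
    intro i
    have h3 : 2 * (i + 12) + 1 = 2*i + 25 := by ring
    simp only [hf, h3, abs_div, abs_mul, abs_pow, abs_neg, abs_one, one_pow, one_mul,
      Nat.abs_cast]
  have hterm : ∀ i, |f (i+12)| ≤ |u|^25/((25)! :ℝ) * (1/2:ℝ)^i := by
    intro i
    rw [habs i]
    exact tail_term u hu 25 (by norm_num) i
  have hsum2 : Summable (fun i => |f (i+12)|) := ((summable_nat_add_iff 12).2 hs).abs
  have hgeo : Summable (fun i : ℕ => |u|^25/((25)! :ℝ) * (1/2:ℝ)^i) :=
    (summable_geometric_of_lt_one (by norm_num) (by norm_num)).mul_left _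
  calc |∑' i, f (i+12)| ≤ ∑' i, |f (i+12)| := by
        simpa [Real.norm_eq_abs] using norm_tsum_le_tsum_norm (f := fun i => f (i+12))
          (by simpa [Real.norm_eq_abs] using hsum2)
    _ ≤ ∑' i : ℕ, |u|^25/((25)! :ℝ) * (1/2:ℝ)^i := Summable.tsum_le_tsum hterm hsum2 hgeo
    _ = |u|^25/((25)! :ℝ) * 2 := by
        rw [tsum_mul_left, tsum_geometric_of_lt_one (by norm_num) (by norm_num)]; norm_num
    _ = 2 * (|u|^25/((25)! :ℝ)) := by ring

private lemma J0_series (p : ℝ) (hp0 : 0 ≤ p) (hp : p ≤ 7.2) :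
    |J0 p - ∑ k ∈ range 12, (-1)^k * p^(2*k)/((2*k)! : ℝ)
        * ∏ i ∈ range k, ((2*(i:ℝ)+1)/(2*(i:ℝ)+2))|
      ≤ 2 * p^24 / ((24)! : ℝ) := by
  set S : ℝ := ∑ k ∈ range 12, (-1)^k * p^(2*k)/((2*k)! : ℝ)
        * ∏ i ∈ range k, ((2*(i:ℝ)+1)/(2*(i:ℝ)+2)) with hS
  set g : ℝ → ℝ := fun t => ∑ k ∈ range 12, (-1)^k * (p * Real.sin t)^(2*k)/((2*k)! : ℝ) with hg
  have hgc : Continuous g := by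
    apply continuous_finset_sum
    intro k _
    fun_prop
  have hcc : Continuous fun t => Real.cos (p * Real.sin t) := by fun_prop
  have hgint : IntervalIntegrable g MeasureTheory.volume 0 π := hgc.intervalIntegrable 0 π
  have hcint : IntervalIntegrable (fun t => Real.cos (p * Real.sin t)) MeasureTheory.volume 0 π :=
    hcc.intervalIntegrable 0 π
  have hmain : ∫ t in (0:ℝ)..π, g t = π * S := by
    rw [hg, intervalIntegral.integral_finset_sum
      (fun k _ => (by fun_prop : Continuous fun t => (-1)^k * (p * Real.sin t)^(2*k)/((2*k)! : ℝ)).intervalIntegrable 0 π)]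
    rw [hS, Finset.mul_sum]
    apply Finset.sum_congr rfl
    intro k _
    have h1 : ∀ t : ℝ, (-1:ℝ)^k * (p * Real.sin t)^(2*k)/((2*k)! : ℝ)
        = ((-1:ℝ)^k * p^(2*k)/((2*k)! : ℝ)) * Real.sin t ^ (2*k) := by
      intro t; rw [mul_pow]; ring
    simp only [h1]
    rw [intervalIntegral.integral_const_mul, integral_sin_pow_even]
    ring
  have hrem : |∫ t in (0:ℝ)..π, (Real.cos (p * Real.sin t) - g t)|
      ≤ (2 * p^24 / ((24)! : ℝ)) * |π - 0| := by
    rw [← Real.norm_eq_abs]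
    apply intervalIntegral.norm_integral_le_of_norm_le_const
    intro t _
    rw [Real.norm_eq_abs]
    have h1 := cos_taylor (p * Real.sin t) (by
      rw [abs_mul, abs_of_nonneg hp0]
      calc p * |Real.sin t| ≤ p * 1 := by
            have := abs_sin_le_one t
            nlinarith
        _ ≤ 7.2 := by linarith)
    calc |Real.cos (p * Real.sin t) - g t| ≤ 2 * (|p * Real.sin t|^24 / ((24)! : ℝ)) := h1
      _ ≤ 2 * p^24 / ((24)! : ℝ) := by
          have h2 : |p * Real.sin t| ^ 24 ≤ p ^ 24 := by
            rw [abs_mul, abs_of_nonneg hp0]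
            apply pow_le_pow_left₀ (by positivity)
            have := abs_sin_le_one t
            nlinarith
          have h3 : (0:ℝ) < ((24)! : ℝ) := by positivity
          rw [mul_div_assoc]
          gcongr
  have hsplit : ∫ t in (0:ℝ)..π, Real.cos (p * Real.sin t)
      = π * S + ∫ t in (0:ℝ)..π, (Real.cos (p * Real.sin t) - g t) := by
    rw [← hmain, ← intervalIntegral.integral_add hgint (hcint.sub hgint)]
    simp
  have hpi : (0:ℝ) < π := pi_pos
  have hJ : J0 p - S = (1/π) * ∫ t in (0:ℝ)..π, (Real.cos (p * Real.sin t) - g t) := by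
    rw [J0, hsplit]
    field_simp
    ring
  rw [hJ, abs_mul, abs_of_nonneg (by positivity : (0:ℝ) ≤ 1/π)]
  rw [sub_zero, abs_of_nonneg hpi.le] at hrem
  calc 1/π * |∫ t in (0:ℝ)..π, (Real.cos (p * Real.sin t) - g t)|
      ≤ 1/π * ((2 * p^24 / ((24)! : ℝ)) * π) := by
        have : (0:ℝ) < 1/π := by positivity
        nlinarith [hrem]
    _ = 2 * p^24 / ((24)! : ℝ) := by field_simp

private lemma J1_series (p : ℝ) (hp0 : 0 ≤ p) (hp : p ≤ 7.2) :
    |J1 p - ∑ k ∈ range 12, (-1)^k * p^(2*k+1)/((2*k+1)! : ℝ)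
        * ∏ i ∈ range (k+1), ((2*(i:ℝ)+1)/(2*(i:ℝ)+2))|
      ≤ 2 * p^24 / ((24)! : ℝ) + 2 * p^25 / ((25)! : ℝ) := by
  set S : ℝ := ∑ k ∈ range 12, (-1)^k * p^(2*k+1)/((2*k+1)! : ℝ)
        * ∏ i ∈ range (k+1), ((2*(i:ℝ)+1)/(2*(i:ℝ)+2)) with hS
  set gc : ℝ → ℝ := fun t => ∑ k ∈ range 12, (-1)^k * (p * Real.sin t)^(2*k)/((2*k)! : ℝ) with hgc
  set gs : ℝ → ℝ := fun t => ∑ k ∈ range 12, (-1)^k * (p * Real.sin t)^(2*k+1)/((2*k+1)! : ℝ)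
    with hgs
  set m : ℝ → ℝ := fun t => Real.cos t * gc t + Real.sin t * gs t with hm
  have hgcc : Continuous gc := continuous_finset_sum _ (fun k _ => by fun_prop)
  have hgsc : Continuous gs := continuous_finset_sum _ (fun k _ => by fun_prop)
  have hmc : Continuous m := by rw [hm]; fun_prop
  have hcc : Continuous fun t => Real.cos (t - p * Real.sin t) := by fun_prop
  have hmint : IntervalIntegrable m MeasureTheory.volume 0 π := hmc.intervalIntegrable 0 π
  have hcint : IntervalIntegrable (fun t => Real.cos (t - p * Real.sin t))
      MeasureTheory.volume 0 π := hcc.intervalIntegrable 0 π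
  have hzero : ∫ t in (0:ℝ)..π, Real.cos t * gc t = 0 := by
    have : (fun t => Real.cos t * gc t)
        = fun t => ∑ k ∈ range 12, (-1)^k * p^(2*k)/((2*k)! : ℝ)
            * (Real.sin t ^ (2*k) * Real.cos t ^ (2*0+1)) := by
      funext t
      rw [hgc, Finset.mul_sum]
      apply Finset.sum_congr rfl
      intro k _
      rw [mul_pow]
      ring
    rw [this, intervalIntegral.integral_finset_sum
      (fun k _ => (by fun_prop : Continuous fun t => (-1:ℝ)^k * p^(2*k)/((2*k)! : ℝ)
        * (Real.sin t ^ (2*k) * Real.cos t ^ (2*0+1))).intervalIntegrable 0 π)]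
    apply Finset.sum_eq_zero
    intro k _
    rw [intervalIntegral.integral_const_mul, integral_sin_pow_mul_cos_pow_odd]
    simp
  have hmain2 : ∫ t in (0:ℝ)..π, Real.sin t * gs t = π * S := by
    have : (fun t => Real.sin t * gs t)
        = fun t => ∑ k ∈ range 12, (-1)^k * p^(2*k+1)/((2*k+1)! : ℝ)
            * Real.sin t ^ (2*(k+1)) := by
      funext t
      rw [hgs, Finset.mul_sum]
      apply Finset.sum_congr rfl
      intro k _
      rw [mul_pow, show 2*(k+1) = (2*k+1)+1 from by ring, pow_succ]
      ring
    rw [this, intervalIntegral.integral_finset_sum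
      (fun k _ => (by fun_prop : Continuous fun t => (-1:ℝ)^k * p^(2*k+1)/((2*k+1)! : ℝ)
        * Real.sin t ^ (2*(k+1))).intervalIntegrable 0 π)]
    rw [hS, Finset.mul_sum]
    apply Finset.sum_congr rfl
    intro k _
    rw [intervalIntegral.integral_const_mul, integral_sin_pow_even]
    ring
  have hmain : ∫ t in (0:ℝ)..π, m t = π * S := by
    rw [hm]
    rw [intervalIntegral.integral_add ((by fun_prop : Continuous fun t => Real.cos t * gc t).intervalIntegrable 0 π)
      ((by fun_prop : Continuous fun t => Real.sin t * gs t).intervalIntegrable 0 π)]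
    rw [hzero, hmain2, zero_add]
  have hrem : |∫ t in (0:ℝ)..π, (Real.cos (t - p * Real.sin t) - m t)|
      ≤ (2 * p^24 / ((24)! : ℝ) + 2 * p^25 / ((25)! : ℝ)) * |π - 0| := by
    rw [← Real.norm_eq_abs]
    apply intervalIntegral.norm_integral_le_of_norm_le_const
    intro t _
    rw [Real.norm_eq_abs]
    have hu : |p * Real.sin t| ≤ 7.2 := by
      rw [abs_mul, abs_of_nonneg hp0]
      have := abs_sin_le_one t
      nlinarith
    have h1 := cos_taylor (p * Real.sin t) hu
    have h2 := sin_taylor (p * Real.sin t) hu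
    have hdecomp : Real.cos (t - p * Real.sin t) - m t
        = Real.cos t * (Real.cos (p * Real.sin t) - gc t)
          + Real.sin t * (Real.sin (p * Real.sin t) - gs t) := by
      rw [Real.cos_sub, hm]
      ring
    rw [hdecomp]
    have hct := abs_cos_le_one t
    have hst := abs_sin_le_one t
    have hpow24 : |p * Real.sin t| ^ 24 ≤ p ^ 24 := by
      rw [abs_mul, abs_of_nonneg hp0]
      apply pow_le_pow_left₀ (by positivity)
      nlinarith
    have hpow25 : |p * Real.sin t| ^ 25 ≤ p ^ 25 := by
      rw [abs_mul, abs_of_nonneg hp0]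
      apply pow_le_pow_left₀ (by positivity)
      nlinarith
    have hf24 : (0:ℝ) < ((24)! : ℝ) := by positivity
    have hf25 : (0:ℝ) < ((25)! : ℝ) := by positivity
    calc |Real.cos t * (Real.cos (p * Real.sin t) - gc t)
          + Real.sin t * (Real.sin (p * Real.sin t) - gs t)|
        ≤ |Real.cos t * (Real.cos (p * Real.sin t) - gc t)|
          + |Real.sin t * (Real.sin (p * Real.sin t) - gs t)| := abs_add_le _ _
      _ ≤ |Real.cos (p * Real.sin t) - gc t| + |Real.sin (p * Real.sin t) - gs t| := by
          rw [abs_mul, abs_mul]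
          have h3 := abs_nonneg (Real.cos (p * Real.sin t) - gc t)
          have h4 := abs_nonneg (Real.sin (p * Real.sin t) - gs t)
          nlinarith
      _ ≤ 2 * (|p * Real.sin t|^24 / ((24)! : ℝ)) + 2 * (|p * Real.sin t|^25 / ((25)! : ℝ)) := by
          exact add_le_add h1 h2
      _ ≤ 2 * p^24 / ((24)! : ℝ) + 2 * p^25 / ((25)! : ℝ) := by
          rw [mul_div_assoc, mul_div_assoc]
          gcongr
  have hsplit : ∫ t in (0:ℝ)..π, Real.cos (t - p * Real.sin t)
      = π * S + ∫ t in (0:ℝ)..π, (Real.cos (t - p * Real.sin t) - m t) := by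
    rw [← hmain, ← intervalIntegral.integral_add hmint (hcint.sub hmint)]
    simp
  have hpi : (0:ℝ) < π := pi_pos
  have hJ : J1 p - S = (1/π) * ∫ t in (0:ℝ)..π, (Real.cos (t - p * Real.sin t) - m t) := by
    rw [J1, hsplit]
    field_simp
    ring
  rw [hJ, abs_mul, abs_of_nonneg (by positivity : (0:ℝ) ≤ 1/π)]
  rw [sub_zero, abs_of_nonneg hpi.le] at hrem
  calc 1/π * |∫ t in (0:ℝ)..π, (Real.cos (t - p * Real.sin t) - m t)|
      ≤ 1/π * ((2 * p^24 / ((24)! : ℝ) + 2 * p^25 / ((25)! : ℝ)) * π) := by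
        have : (0:ℝ) < 1/π := by positivity
        nlinarith [hrem]
    _ = 2 * p^24 / ((24)! : ℝ) + 2 * p^25 / ((25)! : ℝ) := by field_simp

private lemma cos_lip (a b : ℝ) : |Real.cos a - Real.cos b| ≤ |a - b| := by
  rw [Real.cos_sub_cos]
  rw [abs_mul, abs_mul]
  have h1 := abs_sin_le_one ((a+b)/2)
  have h2 := Real.abs_sin_le_abs (x := (a-b)/2)
  have h3 : |(a-b)/2| = |a-b|/2 := by rw [abs_div]; norm_num
  have h4 := abs_nonneg (Real.sin ((a-b)/2))
  have h5 := abs_nonneg (a - b)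
  rw [h3] at h2
  calc |(-2 : ℝ)| * |Real.sin ((a+b)/2)| * |Real.sin ((a-b)/2)|
      ≤ 2 * 1 * (|a-b|/2) := by
        rw [abs_neg, abs_two]
        have h6 := abs_nonneg (Real.sin ((a+b)/2))
        nlinarith
    _ = |a - b| := by ring

private lemma J0_lip (x y : ℝ) : |J0 x - J0 y| ≤ |x - y| := by
  have hpi : (0:ℝ) < π := pi_pos
  have hint : ∀ z : ℝ, IntervalIntegrable (fun t => Real.cos (z * Real.sin t))
      MeasureTheory.volume 0 π := fun z => (by fun_prop : Continuous _).intervalIntegrable 0 π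
  have hsub : J0 x - J0 y
      = (1/π) * ∫ t in (0:ℝ)..π, (Real.cos (x * Real.sin t) - Real.cos (y * Real.sin t)) := by
    rw [J0, J0, intervalIntegral.integral_sub (hint x) (hint y)]
    ring
  have hbd : |∫ t in (0:ℝ)..π, (Real.cos (x * Real.sin t) - Real.cos (y * Real.sin t))|
      ≤ |x - y| * |π - 0| := by
    rw [← Real.norm_eq_abs]
    apply intervalIntegral.norm_integral_le_of_norm_le_const
    intro t _
    rw [Real.norm_eq_abs]
    calc |Real.cos (x * Real.sin t) - Real.cos (y * Real.sin t)|
        ≤ |x * Real.sin t - y * Real.sin t| := cos_lip _ _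
      _ = |x - y| * |Real.sin t| := by rw [← sub_mul, abs_mul]
      _ ≤ |x - y| * 1 := by
          have := abs_sin_le_one t
          have := abs_nonneg (x - y)
          nlinarith
      _ = |x - y| := mul_one _
  rw [sub_zero, abs_of_nonneg hpi.le] at hbd
  rw [hsub, abs_mul, abs_of_nonneg (by positivity : (0:ℝ) ≤ 1/π)]
  calc 1/π * |∫ t in (0:ℝ)..π, (Real.cos (x * Real.sin t) - Real.cos (y * Real.sin t))|
      ≤ 1/π * (|x - y| * π) := by
        have : (0:ℝ) < 1/π := by positivity
        nlinarith [hbd]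
    _ = |x - y| := by field_simp

private lemma J1_lip (x y : ℝ) : |J1 x - J1 y| ≤ |x - y| := by
  have hpi : (0:ℝ) < π := pi_pos
  have hint : ∀ z : ℝ, IntervalIntegrable (fun t => Real.cos (t - z * Real.sin t))
      MeasureTheory.volume 0 π := fun z => (by fun_prop : Continuous _).intervalIntegrable 0 π
  have hsub : J1 x - J1 y
      = (1/π) * ∫ t in (0:ℝ)..π,
          (Real.cos (t - x * Real.sin t) - Real.cos (t - y * Real.sin t)) := by
    rw [J1, J1, intervalIntegral.integral_sub (hint x) (hint y)]
    ring
  have hbd : |∫ t in (0:ℝ)..π,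
        (Real.cos (t - x * Real.sin t) - Real.cos (t - y * Real.sin t))|
      ≤ |x - y| * |π - 0| := by
    rw [← Real.norm_eq_abs]
    apply intervalIntegral.norm_integral_le_of_norm_le_const
    intro t _
    rw [Real.norm_eq_abs]
    calc |Real.cos (t - x * Real.sin t) - Real.cos (t - y * Real.sin t)|
        ≤ |(t - x * Real.sin t) - (t - y * Real.sin t)| := cos_lip _ _
      _ = |x - y| * |Real.sin t| := by
          rw [show (t - x * Real.sin t) - (t - y * Real.sin t) = -((x-y) * Real.sin t) from by ring,
            abs_neg, abs_mul]
      _ ≤ |x - y| * 1 := by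
          have := abs_sin_le_one t
          have := abs_nonneg (x - y)
          nlinarith
      _ = |x - y| := mul_one _
  rw [sub_zero, abs_of_nonneg hpi.le] at hbd
  rw [hsub, abs_mul, abs_of_nonneg (by positivity : (0:ℝ) ≤ 1/π)]
  calc 1/π * |∫ t in (0:ℝ)..π, (Real.cos (t - x * Real.sin t) - Real.cos (t - y * Real.sin t))|
      ≤ 1/π * (|x - y| * π) := by
        have : (0:ℝ) < 1/π := by positivity
        nlinarith [hbd]
    _ = |x - y| := by field_simp

private lemma S0_eval (p : ℝ) : (∑ k ∈ range 12, (-1)^k * p^(2*k)/((2*k)! : ℝ)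
      * ∏ i ∈ range k, ((2*(i:ℝ)+1)/(2*(i:ℝ)+2)))
    = 1 - p^2/4 + p^4/64 - p^6/2304 + p^8/147456 - p^10/14745600 + p^12/2123366400
      - p^14/416179814400 + p^16/106542032486400 - p^18/34519618525593600
      + p^20/13807847410237440000 - p^22/6682998146554920960000 := by
  simp only [Finset.sum_range_succ, Finset.prod_range_succ, Finset.prod_range_zero,
    Finset.sum_range_zero]
  norm_num [Nat.factorial]
  ring

private lemma S1_eval (p : ℝ) : (∑ k ∈ range 12, (-1)^k * p^(2*k+1)/((2*k+1)! : ℝ)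
      * ∏ i ∈ range (k+1), ((2*(i:ℝ)+1)/(2*(i:ℝ)+2)))
    = p/2 - p^3/16 + p^5/384 - p^7/18432 + p^9/1474560 - p^11/176947200 + p^13/29727129600
      - p^15/6658877030400 + p^17/1917756584755200 - p^19/690392370511872000
      + p^21/303772643025223680000 - p^23/160391955517318103040000 := by
  simp only [Finset.sum_range_succ, Finset.prod_range_succ, Finset.prod_range_zero,
    Finset.sum_range_zero]
  norm_num [Nat.factorial]
  ring

private lemma J0_up (p r x : ℝ) (hp0 : 0 ≤ p) (hp : p ≤ 7.2) (hx : |x - p| ≤ r) :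
    J0 x ≤ (1 - p^2/4 + p^4/64 - p^6/2304 + p^8/147456 - p^10/14745600 + p^12/2123366400
      - p^14/416179814400 + p^16/106542032486400 - p^18/34519618525593600
      + p^20/13807847410237440000 - p^22/6682998146554920960000)
      + 2 * p^24/620448401733239439360000 + r := by
  have h1 := J0_series p hp0 hp
  rw [S0_eval] at h1
  have hf : ((24)! : ℝ) = 620448401733239439360000 := by norm_num [Nat.factorial]
  rw [hf] at h1
  have h2 := J0_lip x p
  have h1' := abs_le.1 h1
  have h2' := abs_le.1 h2
  linarith [h1'.1, h1'.2, h2'.1, h2'.2]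

private lemma J1_low (p r x : ℝ) (hp0 : 0 ≤ p) (hp : p ≤ 7.2) (hx : |x - p| ≤ r) :
    (p/2 - p^3/16 + p^5/384 - p^7/18432 + p^9/1474560 - p^11/176947200 + p^13/29727129600
      - p^15/6658877030400 + p^17/1917756584755200 - p^19/690392370511872000
      + p^21/303772643025223680000 - p^23/160391955517318103040000)
      - 2 * p^24/620448401733239439360000 - 2 * p^25/15511210043330985984000000 - r ≤ J1 x := by
  have h1 := J1_series p hp0 hp
  rw [S1_eval] at h1
  have hf24 : ((24)! : ℝ) = 620448401733239439360000 := by norm_num [Nat.factorial]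
  have hf25 : ((25)! : ℝ) = 15511210043330985984000000 := by norm_num [Nat.factorial]
  rw [hf24, hf25] at h1
  have h2 := J1_lip x p
  have h1' := abs_le.1 h1
  have h2' := abs_le.1 h2
  linarith [h1'.1, h1'.2, h2'.1, h2'.2]

set_option maxHeartbeats 2000000 in
theorem bessel_signs_Sa2 :
    ∀ a ∈ Set.Icc (1.75 : ℝ) 2.5,
      J0 (Real.sqrt 2 * a) < 0 ∧
      0 < J1 (Real.sqrt 2 * a) ∧
      3 * J0 (2 * a) - 2 < 0 ∧
      J0 (2 * Real.sqrt 2 * a) + J0 (2 * a) - 1 < 0 := by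
  have hs := Real.sq_sqrt (show (0:ℝ) ≤ 2 by norm_num)
  have hsn := Real.sqrt_nonneg 2
  have hlo : (1.4142:ℝ) ≤ Real.sqrt 2 := by nlinarith
  have hhi : Real.sqrt 2 ≤ 1.41422 := by nlinarith
  intro a ha
  obtain ⟨ha1, ha2⟩ := ha
  have ha1' : (1.75:ℝ) ≤ a := by exact_mod_cast ha1
  have ha2' : a ≤ (2.5:ℝ) := by exact_mod_cast ha2
  have hx1 : (2.47485:ℝ) ≤ Real.sqrt 2 * a := by nlinarith
  have hx2 : Real.sqrt 2 * a ≤ 3.53555 := by nlinarith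
  have hy1 : (4.9497:ℝ) ≤ 2 * Real.sqrt 2 * a := by nlinarith
  have hy2 : 2 * Real.sqrt 2 * a ≤ 7.0711 := by nlinarith
  have hz1 : (3.5:ℝ) ≤ 2 * a := by linarith
  have hz2 : 2 * a ≤ 5 := by linarith
  -- J0 (2 * a) < 1/2
  have hz : J0 (2 * a) < 1/2 := by
    rcases le_or_gt (2 * a) 4.9 with h | h
    · have hb := J0_up 4.2 0.701 (2 * a) (by norm_num) (by norm_num)
        (by rw [abs_sub_le_iff]; constructor <;> linarith)
      refine lt_of_le_of_lt hb ?_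
      norm_num
    · have hb := J0_up 5.34 0.449 (2 * a) (by norm_num) (by norm_num)
        (by rw [abs_sub_le_iff]; constructor <;> linarith)
      refine lt_of_le_of_lt hb ?_
      norm_num
  refine ⟨?_, ?_, ?_, ?_⟩
  · -- J0 (√2 a) < 0
    rcases le_or_gt (Real.sqrt 2 * a) 2.5625 with h | h
    · have hb := J0_up 2.52 0.046 (Real.sqrt 2 * a) (by norm_num) (by norm_num)
        (by rw [abs_sub_le_iff]; constructor <;> linarith)
      refine lt_of_le_of_lt hb ?_
      norm_num
    rcases le_or_gt (Real.sqrt 2 * a) 2.757 with h2 | h2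
    · have hb := J0_up 2.66 0.099 (Real.sqrt 2 * a) (by norm_num) (by norm_num)
        (by rw [abs_sub_le_iff]; constructor <;> linarith)
      refine lt_of_le_of_lt hb ?_
      norm_num
    rcases le_or_gt (Real.sqrt 2 * a) 3.144 with h3 | h3
    · have hb := J0_up 2.95 0.194 (Real.sqrt 2 * a) (by norm_num) (by norm_num)
        (by rw [abs_sub_le_iff]; constructor <;> linarith)
      refine lt_of_le_of_lt hb ?_
      norm_num
    · have hb := J0_up 3.44 0.296 (Real.sqrt 2 * a) (by norm_num) (by norm_num)
        (by rw [abs_sub_le_iff]; constructor <;> linarith)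
      refine lt_of_le_of_lt hb ?_
      norm_num
  · -- 0 < J1 (√2 a)
    rcases le_or_gt (Real.sqrt 2 * a) 3.125 with h | h
    · have hb := J1_low 2.8 0.327 (Real.sqrt 2 * a) (by norm_num) (by norm_num)
        (by rw [abs_sub_le_iff]; constructor <;> linarith)
      refine lt_of_lt_of_le ?_ hb
      norm_num
    rcases le_or_gt (Real.sqrt 2 * a) 3.475 with h2 | h2
    · have hb := J1_low 3.3 0.176 (Real.sqrt 2 * a) (by norm_num) (by norm_num)
        (by rw [abs_sub_le_iff]; constructor <;> linarith)
      refine lt_of_lt_of_le ?_ hb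
      norm_num
    · have hb := J1_low 3.56 0.089 (Real.sqrt 2 * a) (by norm_num) (by norm_num)
        (by rw [abs_sub_le_iff]; constructor <;> linarith)
      refine lt_of_lt_of_le ?_ hb
      norm_num
  · -- 3 * J0 (2a) - 2 < 0
    linarith
  · -- J0 (2√2 a) + J0 (2a) - 1 < 0
    have hy : J0 (2 * Real.sqrt 2 * a) < 0.45 := by
      rcases le_or_gt (2 * Real.sqrt 2 * a) 5.75 with h | h
      · have hb := J0_up 5.35 0.406 (2 * Real.sqrt 2 * a) (by norm_num) (by norm_num)
          (by rw [abs_sub_le_iff]; constructor <;> linarith)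
        refine lt_of_le_of_lt hb ?_
        norm_num
      rcases le_or_gt (2 * Real.sqrt 2 * a) 6.23 with h2 | h2
      · have hb := J0_up 5.99 0.241 (2 * Real.sqrt 2 * a) (by norm_num) (by norm_num)
          (by rw [abs_sub_le_iff]; constructor <;> linarith)
        refine lt_of_le_of_lt hb ?_
        norm_num
      rcases le_or_gt (2 * Real.sqrt 2 * a) 6.55 with h3 | h3
      · have hb := J0_up 6.39 0.166 (2 * Real.sqrt 2 * a) (by norm_num) (by norm_num)
          (by rw [abs_sub_le_iff]; constructor <;> linarith)
        refine lt_of_le_of_lt hb ?_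
        norm_num
      rcases le_or_gt (2 * Real.sqrt 2 * a) 6.81 with h4 | h4
      · have hb := J0_up 6.68 0.133 (2 * Real.sqrt 2 * a) (by norm_num) (by norm_num)
          (by rw [abs_sub_le_iff]; constructor <;> linarith)
        refine lt_of_le_of_lt hb ?_
        norm_num
      rcases le_or_gt (2 * Real.sqrt 2 * a) 7.049 with h5 | h5
      · have hb := J0_up 6.93 0.12 (2 * Real.sqrt 2 * a) (by norm_num) (by norm_num)
          (by rw [abs_sub_le_iff]; constructor <;> linarith)
        refine lt_of_le_of_lt hb ?_
        norm_num
      · have hb := J0_up 7.17 0.121 (2 * Real.sqrt 2 * a) (by norm_num) (by norm_num)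
          (by rw [abs_sub_le_iff]; constructor <;> linarith)
        refine lt_of_le_of_lt hb ?_
        norm_num
    linarith
end

section
/- For all a in the interval [1.25, 1.65]: J0(√2 a) > 0, J1(√2 a) > 0, and ρ1 := 2J0²(√2 a) − (1/2)[J0(2√2 a) + J0(2a) + 1] < 0. -/
open Real

open Finset Nat

noncomputable def Tc (n : ℕ) (y : ℝ) : ℝ := ∑ k ∈ range n, (-1:ℝ)^k * y^(2*k) / (2*k).factorial
noncomputable def Ts (n : ℕ) (y : ℝ) : ℝ := ∑ k ∈ range n, (-1:ℝ)^k * y^(2*k+1) / (2*k+1).factorial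

lemma fact_cast (k : ℕ) : ((2*k+1).factorial : ℝ) = (2*k+1) * (2*k).factorial := by
  rw [Nat.factorial_succ]; push_cast; ring

lemma fact_cast2 (k : ℕ) : ((2*(k+1)).factorial : ℝ) = (2*k+2) * ((2*k+1) * (2*k).factorial) := by
  have h : 2*(k+1) = (2*k+1)+1 := by omega
  rw [h, Nat.factorial_succ, Nat.factorial_succ]; push_cast; ring

lemma hasDerivAt_Ts (n : ℕ) (y : ℝ) : HasDerivAt (Ts n) (Tc n y) y := by
  unfold Tc
  apply HasDerivAt.fun_sum
  intro k _
  have h := (((hasDerivAt_pow (2*k+1) y).const_mul ((-1:ℝ)^k)).div_const (((2*k+1).factorial : ℝ)))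
  refine h.congr_deriv ?_
  have e1 : 2*k+1-1 = 2*k := by omega
  rw [e1, fact_cast]
  have h2 : ((2*k).factorial : ℝ) ≠ 0 := by positivity
  push_cast
  field_simp

lemma hasDerivAt_Tc (n : ℕ) (y : ℝ) : HasDerivAt (Tc (n+1)) (-Ts n y) y := by
  have e : Tc (n+1) = fun z : ℝ => (∑ k ∈ range n, (-1:ℝ)^(k+1) * z^(2*(k+1)) / (2*(k+1)).factorial) + 1 := by
    funext z
    unfold Tc
    rw [Finset.sum_range_succ']
    norm_num
  rw [e]
  have h1 : HasDerivAt (fun z : ℝ => ∑ k ∈ range n, (-1:ℝ)^(k+1) * z^(2*(k+1)) / (2*(k+1)).factorial)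
      (∑ k ∈ range n, -((-1:ℝ)^k * y^(2*k+1) / (2*k+1).factorial)) y := by
    apply HasDerivAt.fun_sum
    intro k _
    have h := (((hasDerivAt_pow (2*(k+1)) y).const_mul ((-1:ℝ)^(k+1))).div_const (((2*(k+1)).factorial : ℝ)))
    refine h.congr_deriv ?_
    have e1 : 2*(k+1)-1 = 2*k+1 := by omega
    rw [e1, fact_cast2, fact_cast]
    have h2 : ((2*k).factorial : ℝ) ≠ 0 := by positivity
    push_cast
    field_simp
    ring
  have h2 := h1.add_const 1
  refine h2.congr_deriv ?_
  unfold Ts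
  rw [← Finset.sum_neg_distrib]

lemma Ts_zero (n : ℕ) : Ts n 0 = 0 := by
  unfold Ts
  apply Finset.sum_eq_zero
  intro k _
  simp [pow_succ]

lemma Tc_zero (n : ℕ) : Tc (n+1) 0 = 1 := by
  unfold Tc
  rw [Finset.sum_range_succ']
  have h : ∀ k ∈ range n, (-1:ℝ)^(k+1) * (0:ℝ)^(2*(k+1)) / (2*(k+1)).factorial = 0 := by
    intro k _
    simp [pow_succ, Nat.mul_succ]
  rw [Finset.sum_congr rfl h]
  norm_num

lemma Tc_cont (n : ℕ) : Continuous (Tc n) := by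
  unfold Tc
  exact continuous_finset_sum _ fun k _ => (continuous_const.mul (continuous_pow _)).div_const _

lemma Ts_cont (n : ℕ) : Continuous (Ts n) := by
  unfold Ts
  exact continuous_finset_sum _ fun k _ => (continuous_const.mul (continuous_pow _)).div_const _

lemma nonneg_of_deriv (f g : ℝ → ℝ) (hd : ∀ y, HasDerivAt f (g y) y) (h0 : f 0 = 0)
    (hg : ∀ y, 0 ≤ y → 0 ≤ g y) : ∀ y, 0 ≤ y → 0 ≤ f y := by
  intro y hy
  have hmono : MonotoneOn f (Set.Ici (0:ℝ)) := by
    apply monotoneOn_of_deriv_nonneg (convex_Ici 0)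
    · exact Continuous.continuousOn (by
        rw [continuous_iff_continuousAt]; exact fun z => (hd z).continuousAt)
    · intro z _
      exact (hd z).differentiableAt.differentiableWithinAt
    · intro z hz
      rw [(hd z).deriv]
      exact hg z (le_of_lt (by simpa using hz))
  have := hmono (Set.mem_Ici.mpr le_rfl) (Set.mem_Ici.mpr hy) hy
  linarith [h0 ▸ this]

lemma step_sin_ub (n : ℕ) (h : ∀ y, 0 ≤ y → cos y ≤ Tc n y) : ∀ y, 0 ≤ y → sin y ≤ Ts n y := by
  have key := nonneg_of_deriv (fun y => Ts n y - sin y) (fun y => Tc n y - cos y)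
    (fun y => (hasDerivAt_Ts n y).sub (hasDerivAt_sin y))
    (by simp [Ts_zero]) (fun y hy => by linarith [h y hy])
  intro y hy; have := key y hy; linarith

lemma step_cos_lb (n : ℕ) (h : ∀ y, 0 ≤ y → sin y ≤ Ts n y) : ∀ y, 0 ≤ y → Tc (n+1) y ≤ cos y := by
  have key := nonneg_of_deriv (fun y => cos y - Tc (n+1) y) (fun y => -sin y + Ts n y)
    (fun y => by simpa using (hasDerivAt_cos y).fun_sub (hasDerivAt_Tc n y))
    (by simp [Tc_zero]) (fun y hy => by linarith [h y hy])
  intro y hy; have := key y hy; linarith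

lemma step_sin_lb (n : ℕ) (h : ∀ y, 0 ≤ y → Tc n y ≤ cos y) : ∀ y, 0 ≤ y → Ts n y ≤ sin y := by
  have key := nonneg_of_deriv (fun y => sin y - Ts n y) (fun y => cos y - Tc n y)
    (fun y => (hasDerivAt_sin y).sub (hasDerivAt_Ts n y))
    (by simp [Ts_zero]) (fun y hy => by linarith [h y hy])
  intro y hy; have := key y hy; linarith

lemma step_cos_ub (n : ℕ) (h : ∀ y, 0 ≤ y → Ts n y ≤ sin y) : ∀ y, 0 ≤ y → cos y ≤ Tc (n+1) y := by
  have key := nonneg_of_deriv (fun y => Tc (n+1) y - cos y) (fun y => -Ts n y + sin y)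
    (fun y => by simpa using (hasDerivAt_Tc n y).fun_sub (hasDerivAt_cos y))
    (by simp [Tc_zero]) (fun y hy => by linarith [h y hy])
  intro y hy; have := key y hy; linarith

lemma taylor_bounds (m : ℕ) :
    (∀ y, 0 ≤ y → cos y ≤ Tc (2*m+1) y) ∧ (∀ y, 0 ≤ y → Tc (2*m+2) y ≤ cos y) := by
  induction m with
  | zero =>
    have h1 : ∀ y : ℝ, 0 ≤ y → cos y ≤ Tc 1 y := by
      intro y _
      have : Tc 1 y = 1 := by unfold Tc; simp
      rw [this]; exact cos_le_one y
    exact ⟨h1, step_cos_lb 1 (step_sin_ub 1 h1)⟩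
  | succ k ih =>
    have h1 : ∀ y, 0 ≤ y → cos y ≤ Tc (2*(k+1)+1) y := by
      have := step_cos_ub (2*k+2) (step_sin_lb (2*k+2) ih.2)
      intro y hy
      have e : 2*(k+1)+1 = 2*k+2+1 := by omega
      rw [e]; exact this y hy
    refine ⟨h1, ?_⟩
    have := step_cos_lb (2*(k+1)+1) (step_sin_ub (2*(k+1)+1) h1)
    intro y hy
    have e : 2*(k+1)+2 = 2*(k+1)+1+1 := by omega
    rw [e]; exact this y hy

lemma sin_lb (m : ℕ) : ∀ y, 0 ≤ y → Ts (2*m+2) y ≤ sin y :=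
  step_sin_lb _ (taylor_bounds m).2

lemma cos_ge_Tc10 : ∀ y, 0 ≤ y → Tc 10 y ≤ cos y := by
  have := (taylor_bounds 4).2; norm_num at this ⊢; exact this

lemma cos_le_Tc11 : ∀ y, 0 ≤ y → cos y ≤ Tc 11 y := by
  have := (taylor_bounds 5).1; norm_num at this ⊢; exact this

lemma cos_ge_Tc6 : ∀ y, 0 ≤ y → Tc 6 y ≤ cos y := by
  have := (taylor_bounds 2).2; norm_num at this ⊢; exact this

lemma cos_le_Tc7 : ∀ y, 0 ≤ y → cos y ≤ Tc 7 y := by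
  have := (taylor_bounds 3).1; norm_num at this ⊢; exact this

lemma sin_ge_Ts4 : ∀ y, 0 ≤ y → Ts 4 y ≤ sin y := by
  have := sin_lb 1; norm_num at this ⊢; exact this

lemma int_Tc (m : ℕ) (x : ℝ) : ∫ t in (0:ℝ)..π, Tc m (x * sin t)
    = π * ∑ k ∈ range m, (-1:ℝ)^k * x^(2*k) / (2*k).factorial * ∏ i ∈ range k, (2*(i:ℝ)+1)/(2*i+2) := by
  unfold Tc
  rw [intervalIntegral.integral_finset_sum (fun k _ => by
    apply Continuous.intervalIntegrable; fun_prop)]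
  rw [Finset.mul_sum]
  apply Finset.sum_congr rfl
  intro k _
  have h : Set.EqOn (fun t => (-1:ℝ)^k * (x*sin t)^(2*k) / (2*k).factorial)
      (fun t => ((-1:ℝ)^k * x^(2*k) / (2*k).factorial) * (sin t)^(2*k)) (Set.uIcc 0 π) := by
    intro t _
    simp only [mul_pow]
    ring
  rw [intervalIntegral.integral_congr h, intervalIntegral.integral_const_mul,
    integral_sin_pow_even]
  ring

lemma int_cos_sin_pow (n : ℕ) : ∫ t in (0:ℝ)..π, cos t * (sin t)^n = 0 := by
  have h : ∀ t ∈ Set.uIcc (0:ℝ) π, HasDerivAt (fun t => sin t ^ (n+1) / (n+1))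
      (cos t * sin t ^ n) t := by
    intro t _
    have h1 := ((hasDerivAt_sin t).pow (n+1)).div_const ((n:ℝ)+1)
    refine h1.congr_deriv ?_
    have e : n + 1 - 1 = n := by omega
    rw [e]
    push_cast
    have h2 : ((n:ℝ)+1) ≠ 0 := by positivity
    field_simp
  rw [intervalIntegral.integral_eq_sub_of_hasDerivAt h (by
    apply Continuous.intervalIntegrable; fun_prop)]
  simp

lemma int_cos_Tc (m : ℕ) (x : ℝ) : ∫ t in (0:ℝ)..π, cos t * Tc m (x * sin t) = 0 := by
  unfold Tc
  have h : Set.EqOn (fun t => cos t * ∑ k ∈ range m, (-1:ℝ)^k * (x*sin t)^(2*k) / (2*k).factorial)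
      (fun t => ∑ k ∈ range m, ((-1:ℝ)^k * x^(2*k) / (2*k).factorial) * (cos t * (sin t)^(2*k))) (Set.uIcc 0 π) := by
    intro t _
    simp only [Finset.mul_sum, mul_pow]
    apply Finset.sum_congr rfl
    intro k _
    ring
  rw [intervalIntegral.integral_congr h]
  rw [intervalIntegral.integral_finset_sum (fun k _ => by
    apply Continuous.intervalIntegrable; fun_prop)]
  apply Finset.sum_eq_zero
  intro k _
  rw [intervalIntegral.integral_const_mul, int_cos_sin_pow]
  ring

lemma int_sin_Ts (m : ℕ) (x : ℝ) : ∫ t in (0:ℝ)..π, sin t * Ts m (x * sin t)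
    = π * ∑ k ∈ range m, (-1:ℝ)^k * x^(2*k+1) / (2*k+1).factorial * ∏ i ∈ range (k+1), (2*(i:ℝ)+1)/(2*i+2) := by
  unfold Ts
  have h : Set.EqOn (fun t => sin t * ∑ k ∈ range m, (-1:ℝ)^k * (x*sin t)^(2*k+1) / (2*k+1).factorial)
      (fun t => ∑ k ∈ range m, ((-1:ℝ)^k * x^(2*k+1) / (2*k+1).factorial) * ((sin t)^(2*(k+1)))) (Set.uIcc 0 π) := by
    intro t _
    simp only [Finset.mul_sum, mul_pow]
    apply Finset.sum_congr rfl
    intro k _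
    have e : 2*(k+1) = (2*k+1)+1 := by omega
    rw [e]
    ring
  rw [intervalIntegral.integral_congr h]
  rw [intervalIntegral.integral_finset_sum (fun k _ => by
    apply Continuous.intervalIntegrable; fun_prop)]
  rw [Finset.mul_sum]
  apply Finset.sum_congr rfl
  intro k _
  rw [intervalIntegral.integral_const_mul, integral_sin_pow_even]
  ring



lemma int_Tc_10 (x : ℝ) : ∫ t in (0:ℝ)..π, Tc 10 (x * sin t)
    = π * (1 - x^2/4 + x^4/64 - x^6/2304 + x^8/147456 - x^10/14745600 + x^12/2123366400
      - x^14/416179814400 + x^16/106542032486400 - x^18/34519618525593600) := by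
  rw [int_Tc]
  rw [show (10:ℕ) = 9+1 from rfl]
  simp only [Finset.sum_range_succ, Finset.prod_range_succ, Finset.sum_range_zero,
    Finset.prod_range_zero]
  norm_num [Nat.factorial]
  ring_nf

lemma int_Tc_11 (x : ℝ) : ∫ t in (0:ℝ)..π, Tc 11 (x * sin t)
    = π * (1 - x^2/4 + x^4/64 - x^6/2304 + x^8/147456 - x^10/14745600 + x^12/2123366400
      - x^14/416179814400 + x^16/106542032486400 - x^18/34519618525593600
      + x^20/13807847410237440000) := by
  rw [int_Tc]
  rw [show (11:ℕ) = 10+1 from rfl]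
  simp only [Finset.sum_range_succ, Finset.prod_range_succ, Finset.sum_range_zero,
    Finset.prod_range_zero]
  norm_num [Nat.factorial]
  ring_nf

lemma int_sin_Ts_4 (x : ℝ) : ∫ t in (0:ℝ)..π, sin t * Ts 4 (x * sin t)
    = π * (x/2 - x^3/16 + x^5/384 - x^7/18432) := by
  rw [int_sin_Ts]
  rw [show (4:ℕ) = 3+1 from rfl]
  simp only [Finset.sum_range_succ, Finset.prod_range_succ, Finset.sum_range_zero,
    Finset.prod_range_zero]
  norm_num [Nat.factorial]
  ring_nf

lemma int_sin12 : ∫ t in (0:ℝ)..π, (sin t)^12 = π * (231/1024) := by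
  have h := integral_sin_pow_even (n := 6)
  norm_num [Finset.prod_range_succ] at h
  rw [show (12:ℕ) = 2*6 from rfl]
  rw [h]

lemma pi_J0 (x : ℝ) : π * J0 x = ∫ t in (0:ℝ)..π, cos (x * sin t) := by
  unfold J0
  have h : π ≠ 0 := pi_ne_zero
  field_simp

lemma pi_J1 (x : ℝ) : π * J1 x = ∫ t in (0:ℝ)..π, cos (t - x * sin t) := by
  unfold J1
  have h : π ≠ 0 := pi_ne_zero
  field_simp

lemma J0_ge (x u : ℝ) (hx : 0 ≤ x) (hu : x^2 = u) :
    1 - u/4 + u^2/64 - u^3/2304 + u^4/147456 - u^5/14745600 + u^6/2123366400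
      - u^7/416179814400 + u^8/106542032486400 - u^9/34519618525593600 ≤ J0 x := by
  have hmono : ∫ t in (0:ℝ)..π, Tc 10 (x * sin t) ≤ ∫ t in (0:ℝ)..π, cos (x * sin t) := by
    apply intervalIntegral.integral_mono_on pi_pos.le
    · exact (((Tc_cont 10).comp (continuous_const.mul continuous_sin)).intervalIntegrable 0 π)
    · exact ((Real.continuous_cos.comp (continuous_const.mul continuous_sin)).intervalIntegrable 0 π)
    · intro t ht
      exact cos_ge_Tc10 _ (mul_nonneg hx (sin_nonneg_of_nonneg_of_le_pi ht.1 ht.2))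
  rw [int_Tc_10, ← pi_J0] at hmono
  have hπ := pi_pos
  have key : 1 - x^2/4 + x^4/64 - x^6/2304 + x^8/147456 - x^10/14745600 + x^12/2123366400
      - x^14/416179814400 + x^16/106542032486400 - x^18/34519618525593600 ≤ J0 x := by
    nlinarith [hmono, hπ]
  have e : 1 - u/4 + u^2/64 - u^3/2304 + u^4/147456 - u^5/14745600 + u^6/2123366400
      - u^7/416179814400 + u^8/106542032486400 - u^9/34519618525593600
      = 1 - x^2/4 + x^4/64 - x^6/2304 + x^8/147456 - x^10/14745600 + x^12/2123366400
      - x^14/416179814400 + x^16/106542032486400 - x^18/34519618525593600 := by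
    rw [← hu]; ring
  linarith [e ▸ key]

lemma J0_le (x u : ℝ) (hx : 0 ≤ x) (hu : x^2 = u) :
    J0 x ≤ 1 - u/4 + u^2/64 - u^3/2304 + u^4/147456 - u^5/14745600 + u^6/2123366400
      - u^7/416179814400 + u^8/106542032486400 - u^9/34519618525593600
      + u^10/13807847410237440000 := by
  have hmono : ∫ t in (0:ℝ)..π, cos (x * sin t) ≤ ∫ t in (0:ℝ)..π, Tc 11 (x * sin t) := by
    apply intervalIntegral.integral_mono_on pi_pos.le
    · exact ((Real.continuous_cos.comp (continuous_const.mul continuous_sin)).intervalIntegrable 0 π)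
    · exact (((Tc_cont 11).comp (continuous_const.mul continuous_sin)).intervalIntegrable 0 π)
    · intro t ht
      exact cos_le_Tc11 _ (mul_nonneg hx (sin_nonneg_of_nonneg_of_le_pi ht.1 ht.2))
  rw [int_Tc_11, ← pi_J0] at hmono
  have hπ := pi_pos
  have key : J0 x ≤ 1 - x^2/4 + x^4/64 - x^6/2304 + x^8/147456 - x^10/14745600 + x^12/2123366400
      - x^14/416179814400 + x^16/106542032486400 - x^18/34519618525593600
      + x^20/13807847410237440000 := by
    nlinarith [hmono, hπ]
  have e : 1 - u/4 + u^2/64 - u^3/2304 + u^4/147456 - u^5/14745600 + u^6/2123366400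
      - u^7/416179814400 + u^8/106542032486400 - u^9/34519618525593600
      + u^10/13807847410237440000
      = 1 - x^2/4 + x^4/64 - x^6/2304 + x^8/147456 - x^10/14745600 + x^12/2123366400
      - x^14/416179814400 + x^16/106542032486400 - x^18/34519618525593600
      + x^20/13807847410237440000 := by
    rw [← hu]; ring
  linarith [e ▸ key]

lemma Tc7_eq (y : ℝ) : Tc 7 y = Tc 6 y + y^12/479001600 := by
  unfold Tc
  rw [show (7:ℕ) = 6+1 from rfl, Finset.sum_range_succ]
  norm_num [Nat.factorial]

lemma J1_ge (x u : ℝ) (hx : 0 ≤ x) (hu : x^2 = u) :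
    x * (1/2 - u/16 + u^2/384 - u^3/18432) - u^6/2123366400 ≤ J1 x := by
  have c1 : Continuous fun t : ℝ => Tc 6 (x * sin t) :=
    (Tc_cont 6).comp (continuous_const.mul continuous_sin)
  have c2 : Continuous fun t : ℝ => Ts 4 (x * sin t) :=
    (Ts_cont 4).comp (continuous_const.mul continuous_sin)
  have hpt : ∀ t ∈ Set.Icc (0:ℝ) π,
      cos t * Tc 6 (x*sin t) + sin t * Ts 4 (x*sin t) - x^12/479001600*(sin t)^12
        ≤ cos (t - x*sin t) := by
    intro t ht
    have hs : 0 ≤ sin t := sin_nonneg_of_nonneg_of_le_pi ht.1 ht.2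
    have hy : 0 ≤ x * sin t := mul_nonneg hx hs
    have h1 : Tc 6 (x*sin t) ≤ cos (x*sin t) := cos_ge_Tc6 _ hy
    have h2 : cos (x*sin t) ≤ Tc 6 (x*sin t) + (x*sin t)^12/479001600 := by
      have h := cos_le_Tc7 _ hy
      have e := Tc7_eq (x*sin t)
      linarith
    have h3 : sin t * Ts 4 (x*sin t) ≤ sin t * sin (x*sin t) :=
      mul_le_mul_of_nonneg_left (sin_ge_Ts4 _ hy) hs
    have h4 : -1 ≤ cos t := neg_one_le_cos t
    have h5 : cos t ≤ 1 := cos_le_one t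
    rw [cos_sub]
    have h6 : cos t * Tc 6 (x*sin t) - (x*sin t)^12/479001600 ≤ cos t * cos (x*sin t) := by
      nlinarith
    have e2 : (x*sin t)^12 = x^12*(sin t)^12 := by rw [mul_pow]
    rw [e2] at h6
    linarith
  have hmono : ∫ t in (0:ℝ)..π,
      (cos t * Tc 6 (x*sin t) + sin t * Ts 4 (x*sin t) - x^12/479001600*(sin t)^12)
      ≤ ∫ t in (0:ℝ)..π, cos (t - x*sin t) := by
    apply intervalIntegral.integral_mono_on pi_pos.le
    · apply Continuous.intervalIntegrable
      exact ((continuous_cos.mul c1).add (continuous_sin.mul c2)).sub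
        (continuous_const.mul (continuous_sin.pow 12))
    · apply Continuous.intervalIntegrable
      exact Real.continuous_cos.comp (continuous_id.sub (continuous_const.mul continuous_sin))
    · exact hpt
  have hval : ∫ t in (0:ℝ)..π,
      (cos t * Tc 6 (x*sin t) + sin t * Ts 4 (x*sin t) - x^12/479001600*(sin t)^12)
      = π * (x/2 - x^3/16 + x^5/384 - x^7/18432) - x^12/479001600*(π*(231/1024)) := by
    rw [intervalIntegral.integral_sub, intervalIntegral.integral_add]
    · rw [int_cos_Tc, int_sin_Ts_4, intervalIntegral.integral_const_mul, int_sin12]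
      ring
    · exact (continuous_cos.mul c1).intervalIntegrable 0 π
    · exact (continuous_sin.mul c2).intervalIntegrable 0 π
    · exact ((continuous_cos.mul c1).add (continuous_sin.mul c2)).intervalIntegrable 0 π
    · exact (continuous_const.mul (continuous_sin.pow 12)).intervalIntegrable 0 π
  rw [hval, ← pi_J1] at hmono
  have hπ := pi_pos
  have key : x/2 - x^3/16 + x^5/384 - x^7/18432 - x^12*(231/490497638400) ≤ J1 x := by
    nlinarith [hmono, hπ]
  have e : x * (1/2 - u/16 + u^2/384 - u^3/18432) - u^6/2123366400
      = x/2 - x^3/16 + x^5/384 - x^7/18432 - x^12*(231/490497638400) := by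
    rw [← hu]; ring
  linarith [e ▸ key]
set_option maxHeartbeats 4000000 in
lemma polyA_pos : ∀ w : ℝ, (25/16) ≤ w → w ≤ (1089/400) → 0 < 1 - 2*w/4 + (2*w)^2/64 - (2*w)^3/2304 + (2*w)^4/147456 - (2*w)^5/14745600 + (2*w)^6/2123366400 - (2*w)^7/416179814400 + (2*w)^8/106542032486400 - (2*w)^9/34519618525593600 := by
  intro w hlo hhi
  rcases le_or_gt w (857/400) with hcut0 | hcut0
  · -- piece
    have hs0 : (0:ℝ) ≤ w - (25/16) := by linarith
    have hs1 : w - (25/16) ≤ (29/50) := by linarith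
    have key : 1 - 2*w/4 + (2*w)^2/64 - (2*w)^3/2304 + (2*w)^4/147456 - (2*w)^5/14745600 + (2*w)^6/2123366400 - (2*w)^7/416179814400 + (2*w)^8/106542032486400 - (2*w)^9/34519618525593600 = (66479953977588920608607/185325790797275313733632) + (-422808117933549971689/1286984658314411900928) * (w - (25/16)) + (959874721998626447/20109135286162685952) * (w - (25/16))^2 + (-218902231300543/76948221758275584) * (w - (25/16))^3 + (2078612315327/22443231346163712) * (w - (25/16))^4 + (-66727759201/35067548978380800) * (w - (25/16))^5 + (12650801/469654673817600) * (w - (25/16))^6 + (-133681/479439146188800) * (w - (25/16))^7 + (263/119859786547200) * (w - (25/16))^8 + (-1/67421129932800) * (w - (25/16))^9 := by ring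
    rw [key]
    have pb2 : (w - (25/16))^2 ≤ (29/50)^2 := pow_le_pow_left₀ hs0 hs1 2
    have nb2 : (0:ℝ) ≤ (w - (25/16))^2 := pow_nonneg hs0 2
    have pb3 : (w - (25/16))^3 ≤ (29/50)^3 := pow_le_pow_left₀ hs0 hs1 3
    have nb3 : (0:ℝ) ≤ (w - (25/16))^3 := pow_nonneg hs0 3
    have pb4 : (w - (25/16))^4 ≤ (29/50)^4 := pow_le_pow_left₀ hs0 hs1 4
    have nb4 : (0:ℝ) ≤ (w - (25/16))^4 := pow_nonneg hs0 4
    have pb5 : (w - (25/16))^5 ≤ (29/50)^5 := pow_le_pow_left₀ hs0 hs1 5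
    have nb5 : (0:ℝ) ≤ (w - (25/16))^5 := pow_nonneg hs0 5
    have pb6 : (w - (25/16))^6 ≤ (29/50)^6 := pow_le_pow_left₀ hs0 hs1 6
    have nb6 : (0:ℝ) ≤ (w - (25/16))^6 := pow_nonneg hs0 6
    have pb7 : (w - (25/16))^7 ≤ (29/50)^7 := pow_le_pow_left₀ hs0 hs1 7
    have nb7 : (0:ℝ) ≤ (w - (25/16))^7 := pow_nonneg hs0 7
    have pb8 : (w - (25/16))^8 ≤ (29/50)^8 := pow_le_pow_left₀ hs0 hs1 8
    have nb8 : (0:ℝ) ≤ (w - (25/16))^8 := pow_nonneg hs0 8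
    have pb9 : (w - (25/16))^9 ≤ (29/50)^9 := pow_le_pow_left₀ hs0 hs1 9
    have nb9 : (0:ℝ) ≤ (w - (25/16))^9 := pow_nonneg hs0 9
    linarith
  have hs0 : (0:ℝ) ≤ w - (857/400) := by linarith
  have hs1 : w - (857/400) ≤ (29/50) := by linarith
  have key : 1 - 2*w/4 + (2*w)^2/64 - (2*w)^3/2304 + (2*w)^4/147456 - (2*w)^5/14745600 + (2*w)^6/2123366400 - (2*w)^7/416179814400 + (2*w)^8/106542032486400 - (2*w)^9/34519618525593600 = (3246492100210456314438242849778433543/17674044685103923200000000000000000000) + (-1354790727163600433647232797790401/4909456856973312000000000000000000) * (w - (857/400)) + (131839125808661238710247102007/3068410535608320000000000000000) * (w - (857/400))^2 + (-8666811225783263980658449/3287582716723200000000000000) * (w - (857/400))^3 + (477972108024159939943/5479304527872000000000000) * (w - (857/400))^4 + (-24808131293935201/13698261319680000000000) * (w - (857/400))^5 + (189511330801/7338354278400000000) * (w - (857/400))^6 + (-80553649/299649466368000000) * (w - (857/400))^7 + (6343/2996494663680000) * (w - (857/400))^8 + (-1/67421129932800) * (w - (857/400))^9 := by ring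
  rw [key]
  have pb2 : (w - (857/400))^2 ≤ (29/50)^2 := pow_le_pow_left₀ hs0 hs1 2
  have nb2 : (0:ℝ) ≤ (w - (857/400))^2 := pow_nonneg hs0 2
  have pb3 : (w - (857/400))^3 ≤ (29/50)^3 := pow_le_pow_left₀ hs0 hs1 3
  have nb3 : (0:ℝ) ≤ (w - (857/400))^3 := pow_nonneg hs0 3
  have pb4 : (w - (857/400))^4 ≤ (29/50)^4 := pow_le_pow_left₀ hs0 hs1 4
  have nb4 : (0:ℝ) ≤ (w - (857/400))^4 := pow_nonneg hs0 4
  have pb5 : (w - (857/400))^5 ≤ (29/50)^5 := pow_le_pow_left₀ hs0 hs1 5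
  have nb5 : (0:ℝ) ≤ (w - (857/400))^5 := pow_nonneg hs0 5
  have pb6 : (w - (857/400))^6 ≤ (29/50)^6 := pow_le_pow_left₀ hs0 hs1 6
  have nb6 : (0:ℝ) ≤ (w - (857/400))^6 := pow_nonneg hs0 6
  have pb7 : (w - (857/400))^7 ≤ (29/50)^7 := pow_le_pow_left₀ hs0 hs1 7
  have nb7 : (0:ℝ) ≤ (w - (857/400))^7 := pow_nonneg hs0 7
  have pb8 : (w - (857/400))^8 ≤ (29/50)^8 := pow_le_pow_left₀ hs0 hs1 8
  have nb8 : (0:ℝ) ≤ (w - (857/400))^8 := pow_nonneg hs0 8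
  have pb9 : (w - (857/400))^9 ≤ (29/50)^9 := pow_le_pow_left₀ hs0 hs1 9
  have nb9 : (0:ℝ) ≤ (w - (857/400))^9 := pow_nonneg hs0 9
  linarith
set_option maxHeartbeats 4000000 in
lemma polyB_pos : ∀ w : ℝ, (25/16) ≤ w → w ≤ (1089/400) → 0 < 1/2 - 2*w/16 + (2*w)^2/384 - (2*w)^3/18432 - 13/64 := by
  intro w hlo hhi
  have hs0 : (0:ℝ) ≤ w - (25/16) := by linarith
  have hs1 : w - (25/16) ≤ (29/25) := by linarith
  have key : 1/2 - 2*w/16 + (2*w)^2/384 - (2*w)^3/18432 - 13/64 = (1182839/9437184) + (-6267/65536) * (w - (25/16)) + (103/12288) * (w - (25/16))^2 + (-1/2304) * (w - (25/16))^3 := by ring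
  rw [key]
  have pb2 : (w - (25/16))^2 ≤ (29/25)^2 := pow_le_pow_left₀ hs0 hs1 2
  have nb2 : (0:ℝ) ≤ (w - (25/16))^2 := pow_nonneg hs0 2
  have pb3 : (w - (25/16))^3 ≤ (29/25)^3 := pow_le_pow_left₀ hs0 hs1 3
  have nb3 : (0:ℝ) ≤ (w - (25/16))^3 := pow_nonneg hs0 3
  linarith
set_option maxHeartbeats 4000000 in
lemma rho_poly_neg : ∀ w : ℝ, (25/16) ≤ w → w ≤ (1089/400) → 2*(1 - 2*w/4 + (2*w)^2/64 - (2*w)^3/2304 + (2*w)^4/147456 - (2*w)^5/14745600 + (2*w)^6/2123366400 - (2*w)^7/416179814400 + (2*w)^8/106542032486400 - (2*w)^9/34519618525593600 + (2*w)^10/13807847410237440000)^2 - (1/2)*((1 - 8*w/4 + (8*w)^2/64 - (8*w)^3/2304 + (8*w)^4/147456 - (8*w)^5/14745600 + (8*w)^6/2123366400 - (8*w)^7/416179814400 + (8*w)^8/106542032486400 - (8*w)^9/34519618525593600) + (1 - 4*w/4 + (4*w)^2/64 - (4*w)^3/2304 + (4*w)^4/147456 - (4*w)^5/14745600 + (4*w)^6/2123366400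 - (4*w)^7/416179814400 + (4*w)^8/106542032486400 - (4*w)^9/34519618525593600) + 1) < 0 := by
  intro w hlo hhi
  rcases le_or_gt w (857/400) with hcut0 | hcut0
  · -- piece
    have hs0 : (0:ℝ) ≤ w - (25/16) := by linarith
    have hs1 : w - (25/16) ≤ (29/50) := by linarith
    have key : 2*(1 - 2*w/4 + (2*w)^2/64 - (2*w)^3/2304 + (2*w)^4/147456 - (2*w)^5/14745600 + (2*w)^6/2123366400 - (2*w)^7/416179814400 + (2*w)^8/106542032486400 - (2*w)^9/34519618525593600 + (2*w)^10/13807847410237440000)^2 - (1/2)*((1 - 8*w/4 + (8*w)^2/64 - (8*w)^3/2304 + (8*w)^4/147456 - (8*w)^5/14745600 + (8*w)^6/2123366400 - (8*w)^7/416179814400 + (8*w)^8/106542032486400 - (8*w)^9/34519618525593600) + (1 - 4*w/4 + (4*w)^2/64 - (4*w)^3/2304 + (4*w)^4/147456 - (4*w)^5/14745600 + (4*w)^6/2123366400 - (4*w)^7/416179814400 + (4*w)^8/106542032486400 - (4*w)^9/34519618525593600) + 1) = (-7336916613020610960922420379176469449459202470271/281359554434133650358389357179873971338018090385408) + (-127664011909371113910601620410615280956529265973/628034719719048326692833386562218686022361808896)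 * (w - (25/16)) + (37199069781412170454169697058280006363889967823/549530379754167285856229213241941350269566582784) * (w - (25/16))^2 + (-59286954210197267353807517346450244041656857/5724274789105909227669054304603555731974651904) * (w - (25/16))^3 + (909458384748342663407483076977757699772079/1431068697276477306917263576150888932993662976) * (w - (25/16))^4 + (732973131214376636530921949681129138147/139752802468405987003639021108485247362662400) * (w - (25/16))^5 + (-57490053049486519038929402338738201721/17469100308550748375454877638560655920332800) * (w - (25/16))^6 + (147048062380976054087688166127268191/545909384642210886732964926205020497510400) * (w - (25/16))^7 + (-285815473158656701094345401413539/38993527474443634766640351871787178393600) * (w - (25/16))^8 + (11262970303210599286024154277379/12794751202551817657803865457930167910400) * (w - (25/16))^9 + (832923823805546117681409655469/39983597507974430180637079556031774720000) * (w - (25/16))^10 + (-83984487520141560156802561/249897484424840188628981747225198592000) * (w - (25/16))^11 + (474680361452462909874931/104123951843683411928742394677166080000) * (w - (25/16))^12 + (-42879030375214586473/813468373778776655693299958415360000) * (w - (25/16))^13 + (53312292334871023/101683546722347081961662494801920000) * (w - (25/16))^14 + (-50997844210171/11348610125261951111792689152000000) * (w - (25/16))^15 + (2616737124551/79440270876833657782548824064000000)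 * (w - (25/16))^16 + (-252170833/1241254232450525902852325376000000) * (w - (25/16))^17 + (478151/465470337168947213569622016000000) * (w - (25/16))^18 + (-59/14545948036529600424050688000000) * (w - (25/16))^19 + (1/90912175228310002650316800000000) * (w - (25/16))^20 := by ring
    rw [key]
    have pb2 : (w - (25/16))^2 ≤ (29/50)^2 := pow_le_pow_left₀ hs0 hs1 2
    have nb2 : (0:ℝ) ≤ (w - (25/16))^2 := pow_nonneg hs0 2
    have pb3 : (w - (25/16))^3 ≤ (29/50)^3 := pow_le_pow_left₀ hs0 hs1 3
    have nb3 : (0:ℝ) ≤ (w - (25/16))^3 := pow_nonneg hs0 3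
    have pb4 : (w - (25/16))^4 ≤ (29/50)^4 := pow_le_pow_left₀ hs0 hs1 4
    have nb4 : (0:ℝ) ≤ (w - (25/16))^4 := pow_nonneg hs0 4
    have pb5 : (w - (25/16))^5 ≤ (29/50)^5 := pow_le_pow_left₀ hs0 hs1 5
    have nb5 : (0:ℝ) ≤ (w - (25/16))^5 := pow_nonneg hs0 5
    have pb6 : (w - (25/16))^6 ≤ (29/50)^6 := pow_le_pow_left₀ hs0 hs1 6
    have nb6 : (0:ℝ) ≤ (w - (25/16))^6 := pow_nonneg hs0 6
    have pb7 : (w - (25/16))^7 ≤ (29/50)^7 := pow_le_pow_left₀ hs0 hs1 7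
    have nb7 : (0:ℝ) ≤ (w - (25/16))^7 := pow_nonneg hs0 7
    have pb8 : (w - (25/16))^8 ≤ (29/50)^8 := pow_le_pow_left₀ hs0 hs1 8
    have nb8 : (0:ℝ) ≤ (w - (25/16))^8 := pow_nonneg hs0 8
    have pb9 : (w - (25/16))^9 ≤ (29/50)^9 := pow_le_pow_left₀ hs0 hs1 9
    have nb9 : (0:ℝ) ≤ (w - (25/16))^9 := pow_nonneg hs0 9
    have pb10 : (w - (25/16))^10 ≤ (29/50)^10 := pow_le_pow_left₀ hs0 hs1 10
    have nb10 : (0:ℝ) ≤ (w - (25/16))^10 := pow_nonneg hs0 10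
    have pb11 : (w - (25/16))^11 ≤ (29/50)^11 := pow_le_pow_left₀ hs0 hs1 11
    have nb11 : (0:ℝ) ≤ (w - (25/16))^11 := pow_nonneg hs0 11
    have pb12 : (w - (25/16))^12 ≤ (29/50)^12 := pow_le_pow_left₀ hs0 hs1 12
    have nb12 : (0:ℝ) ≤ (w - (25/16))^12 := pow_nonneg hs0 12
    have pb13 : (w - (25/16))^13 ≤ (29/50)^13 := pow_le_pow_left₀ hs0 hs1 13
    have nb13 : (0:ℝ) ≤ (w - (25/16))^13 := pow_nonneg hs0 13
    have pb14 : (w - (25/16))^14 ≤ (29/50)^14 := pow_le_pow_left₀ hs0 hs1 14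
    have nb14 : (0:ℝ) ≤ (w - (25/16))^14 := pow_nonneg hs0 14
    have pb15 : (w - (25/16))^15 ≤ (29/50)^15 := pow_le_pow_left₀ hs0 hs1 15
    have nb15 : (0:ℝ) ≤ (w - (25/16))^15 := pow_nonneg hs0 15
    have pb16 : (w - (25/16))^16 ≤ (29/50)^16 := pow_le_pow_left₀ hs0 hs1 16
    have nb16 : (0:ℝ) ≤ (w - (25/16))^16 := pow_nonneg hs0 16
    have pb17 : (w - (25/16))^17 ≤ (29/50)^17 := pow_le_pow_left₀ hs0 hs1 17
    have nb17 : (0:ℝ) ≤ (w - (25/16))^17 := pow_nonneg hs0 17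
    have pb18 : (w - (25/16))^18 ≤ (29/50)^18 := pow_le_pow_left₀ hs0 hs1 18
    have nb18 : (0:ℝ) ≤ (w - (25/16))^18 := pow_nonneg hs0 18
    have pb19 : (w - (25/16))^19 ≤ (29/50)^19 := pow_le_pow_left₀ hs0 hs1 19
    have nb19 : (0:ℝ) ≤ (w - (25/16))^19 := pow_nonneg hs0 19
    have pb20 : (w - (25/16))^20 ≤ (29/50)^20 := pow_le_pow_left₀ hs0 hs1 20
    have nb20 : (0:ℝ) ≤ (w - (25/16))^20 := pow_nonneg hs0 20
    linarith
  have hs0 : (0:ℝ) ≤ w - (857/400) := by linarith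
  have hs1 : w - (857/400) ≤ (29/50) := by linarith
  have key : 2*(1 - 2*w/4 + (2*w)^2/64 - (2*w)^3/2304 + (2*w)^4/147456 - (2*w)^5/14745600 + (2*w)^6/2123366400 - (2*w)^7/416179814400 + (2*w)^8/106542032486400 - (2*w)^9/34519618525593600 + (2*w)^10/13807847410237440000)^2 - (1/2)*((1 - 8*w/4 + (8*w)^2/64 - (8*w)^3/2304 + (8*w)^4/147456 - (8*w)^5/14745600 + (8*w)^6/2123366400 - (8*w)^7/416179814400 + (8*w)^8/106542032486400 - (8*w)^9/34519618525593600) + (1 - 4*w/4 + (4*w)^2/64 - (4*w)^3/2304 + (4*w)^4/147456 - (4*w)^5/14745600 + (4*w)^6/2123366400 - (4*w)^7/416179814400 + (4*w)^8/106542032486400 - (4*w)^9/34519618525593600) + 1) = (-13678088703985542451285741842768615318425500801871460843708092746892516619351179111/111065548633262306057325220988977152000000000000000000000000000000000000000000000000) + (-801497451748530872474120905915739594545741779060094380899975129805866946712667/5949940105353337824499565410123776000000000000000000000000000000000000000000000) * (w - (857/400)) + (31836203322111787589226084013191503098367166236056001059105124964848307528931/624743711062100471572454368062996480000000000000000000000000000000000000000000)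 * (w - (857/400))^2 + (-770246921765757348909018439985782478611406107051797729402555246790550839/86769959869736176607285328897638400000000000000000000000000000000000000000) * (w - (857/400))^3 + (551772333336731893654000681411841297015641485625114407381443182699841/867699598697361766072853288976384000000000000000000000000000000000000000) * (w - (857/400))^4 + (-8891314967945084786892867860143446029802158284355166606231646661/2033670934446941639233249896038400000000000000000000000000000000000000) * (w - (857/400))^5 + (-1526249452502282924514963038815034494204877087897020213407791/677890311482313879744416632012800000000000000000000000000000000000) * (w - (857/400))^6 + (69621909610490122272477683694549682817198735110642068179/282454296450964116560173596672000000000000000000000000000000000) * (w - (857/400))^7 + (-17649163438552922408508996872465892267154375666026943/7263110480167648711547321057280000000000000000000000000000000) * (w - (857/400))^8 + (10539896168343280000176794925589603729013787930023/10592036116911154371006509875200000000000000000000000000000) * (w - (857/400))^9 + (14923496711369650587755583853769218126237814687/794402708768336577825488240640000000000000000000000000000) * (w - (857/400))^10 + (-182132546829599648775371028849842022759857/595802031576252433369116180480000000000000000000000000) * (w - (857/400))^11 + (2765193279644491489231742405041256333/662002257306947148187906867200000000000000000000000) * (w - (857/400))^12 + (-10056076213326730830853465126487/206875705408420983808720896000000000000000000000)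 * (w - (857/400))^13 + (1509686675019799102694706227/3103135581126314757130813440000000000000000000) * (w - (857/400))^14 + (-3876338119636171785409/923552256287593677717504000000000000000000) * (w - (857/400))^15 + (534233271810078347/17239642117368415317393408000000000000000) * (w - (857/400))^16 + (-18683256910933/96972986910197336160337920000000000000) * (w - (857/400))^17 + (52971353/53873881616776297866854400000000000) * (w - (857/400))^18 + (-2381/606081168188733351002112000000000) * (w - (857/400))^19 + (1/90912175228310002650316800000000) * (w - (857/400))^20 := by ring
  rw [key]
  have pb2 : (w - (857/400))^2 ≤ (29/50)^2 := pow_le_pow_left₀ hs0 hs1 2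
  have nb2 : (0:ℝ) ≤ (w - (857/400))^2 := pow_nonneg hs0 2
  have pb3 : (w - (857/400))^3 ≤ (29/50)^3 := pow_le_pow_left₀ hs0 hs1 3
  have nb3 : (0:ℝ) ≤ (w - (857/400))^3 := pow_nonneg hs0 3
  have pb4 : (w - (857/400))^4 ≤ (29/50)^4 := pow_le_pow_left₀ hs0 hs1 4
  have nb4 : (0:ℝ) ≤ (w - (857/400))^4 := pow_nonneg hs0 4
  have pb5 : (w - (857/400))^5 ≤ (29/50)^5 := pow_le_pow_left₀ hs0 hs1 5
  have nb5 : (0:ℝ) ≤ (w - (857/400))^5 := pow_nonneg hs0 5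
  have pb6 : (w - (857/400))^6 ≤ (29/50)^6 := pow_le_pow_left₀ hs0 hs1 6
  have nb6 : (0:ℝ) ≤ (w - (857/400))^6 := pow_nonneg hs0 6
  have pb7 : (w - (857/400))^7 ≤ (29/50)^7 := pow_le_pow_left₀ hs0 hs1 7
  have nb7 : (0:ℝ) ≤ (w - (857/400))^7 := pow_nonneg hs0 7
  have pb8 : (w - (857/400))^8 ≤ (29/50)^8 := pow_le_pow_left₀ hs0 hs1 8
  have nb8 : (0:ℝ) ≤ (w - (857/400))^8 := pow_nonneg hs0 8
  have pb9 : (w - (857/400))^9 ≤ (29/50)^9 := pow_le_pow_left₀ hs0 hs1 9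
  have nb9 : (0:ℝ) ≤ (w - (857/400))^9 := pow_nonneg hs0 9
  have pb10 : (w - (857/400))^10 ≤ (29/50)^10 := pow_le_pow_left₀ hs0 hs1 10
  have nb10 : (0:ℝ) ≤ (w - (857/400))^10 := pow_nonneg hs0 10
  have pb11 : (w - (857/400))^11 ≤ (29/50)^11 := pow_le_pow_left₀ hs0 hs1 11
  have nb11 : (0:ℝ) ≤ (w - (857/400))^11 := pow_nonneg hs0 11
  have pb12 : (w - (857/400))^12 ≤ (29/50)^12 := pow_le_pow_left₀ hs0 hs1 12
  have nb12 : (0:ℝ) ≤ (w - (857/400))^12 := pow_nonneg hs0 12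
  have pb13 : (w - (857/400))^13 ≤ (29/50)^13 := pow_le_pow_left₀ hs0 hs1 13
  have nb13 : (0:ℝ) ≤ (w - (857/400))^13 := pow_nonneg hs0 13
  have pb14 : (w - (857/400))^14 ≤ (29/50)^14 := pow_le_pow_left₀ hs0 hs1 14
  have nb14 : (0:ℝ) ≤ (w - (857/400))^14 := pow_nonneg hs0 14
  have pb15 : (w - (857/400))^15 ≤ (29/50)^15 := pow_le_pow_left₀ hs0 hs1 15
  have nb15 : (0:ℝ) ≤ (w - (857/400))^15 := pow_nonneg hs0 15
  have pb16 : (w - (857/400))^16 ≤ (29/50)^16 := pow_le_pow_left₀ hs0 hs1 16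
  have nb16 : (0:ℝ) ≤ (w - (857/400))^16 := pow_nonneg hs0 16
  have pb17 : (w - (857/400))^17 ≤ (29/50)^17 := pow_le_pow_left₀ hs0 hs1 17
  have nb17 : (0:ℝ) ≤ (w - (857/400))^17 := pow_nonneg hs0 17
  have pb18 : (w - (857/400))^18 ≤ (29/50)^18 := pow_le_pow_left₀ hs0 hs1 18
  have nb18 : (0:ℝ) ≤ (w - (857/400))^18 := pow_nonneg hs0 18
  have pb19 : (w - (857/400))^19 ≤ (29/50)^19 := pow_le_pow_left₀ hs0 hs1 19
  have nb19 : (0:ℝ) ≤ (w - (857/400))^19 := pow_nonneg hs0 19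
  have pb20 : (w - (857/400))^20 ≤ (29/50)^20 := pow_le_pow_left₀ hs0 hs1 20
  have nb20 : (0:ℝ) ≤ (w - (857/400))^20 := pow_nonneg hs0 20
  linarith

set_option maxHeartbeats 4000000 in
theorem bessel_signs_Sa1 :
    ∀ a ∈ Set.Icc (1.25 : ℝ) 1.65,
      0 < J0 (Real.sqrt 2 * a) ∧
      0 < J1 (Real.sqrt 2 * a) ∧
      2 * (J0 (Real.sqrt 2 * a))^2 -
        (1/2) * (J0 (2 * Real.sqrt 2 * a) + J0 (2 * a) + 1) < 0 := by
  intro a ha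
  obtain ⟨ha1, ha2⟩ := ha
  have ha1' : (5/4:ℝ) ≤ a := by norm_num at ha1; linarith
  have ha2' : a ≤ 33/20 := by norm_num at ha2; linarith
  have ha0 : (0:ℝ) ≤ a := by linarith
  have hs2 : Real.sqrt 2 ^ 2 = 2 := Real.sq_sqrt (by norm_num)
  have hs0 : (0:ℝ) ≤ Real.sqrt 2 := Real.sqrt_nonneg 2
  have hs14 : (14/10:ℝ) ≤ Real.sqrt 2 := by nlinarith [hs2, hs0]
  have hx1 : (Real.sqrt 2 * a)^2 = 2*a^2 := by rw [mul_pow, hs2]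
  have hx2 : (2 * Real.sqrt 2 * a)^2 = 8*a^2 := by rw [mul_pow, mul_pow, hs2]; ring
  have hx3 : ((2:ℝ) * a)^2 = 4*a^2 := by ring
  have hw1 : (25/16:ℝ) ≤ a^2 := by nlinarith
  have hw2 : a^2 ≤ 1089/400 := by nlinarith
  have hb1 := J0_ge (Real.sqrt 2 * a) (2*a^2) (by positivity) hx1
  have hb2 := J0_le (Real.sqrt 2 * a) (2*a^2) (by positivity) hx1
  have hb3 := J0_ge (2 * Real.sqrt 2 * a) (8*a^2) (by positivity) hx2
  have hb4 := J0_ge (2 * a) (4*a^2) (by positivity) hx3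
  have hb5 := J1_ge (Real.sqrt 2 * a) (2*a^2) (by positivity) hx1
  have hA := polyA_pos (a^2) hw1 hw2
  have hR := rho_poly_neg (a^2) hw1 hw2
  have hB := polyB_pos (a^2) hw1 hw2
  have hJ0pos : 0 < J0 (Real.sqrt 2 * a) := by linarith
  refine ⟨hJ0pos, ?_, ?_⟩
  · have hx : (7/4:ℝ) ≤ Real.sqrt 2 * a := by nlinarith
    have hr : (13/64:ℝ) ≤ 1/2 - 2*a^2/16 + (2*a^2)^2/384 - (2*a^2)^3/18432 := by linarith
    have hmul : (7/4:ℝ)*(13/64) ≤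
        (Real.sqrt 2 * a) * (1/2 - 2*a^2/16 + (2*a^2)^2/384 - (2*a^2)^3/18432) :=
      mul_le_mul hx hr (by norm_num) (by linarith)
    have h1 : (2*a^2:ℝ) ≤ 1089/200 := by nlinarith
    have h2 : (0:ℝ) ≤ 2*a^2 := by positivity
    have h3 : (2*a^2)^6 ≤ ((1089:ℝ)/200)^6 := pow_le_pow_left₀ h2 h1 6
    have htail : (2*a^2)^6/2123366400 ≤ (1:ℝ)/50000 := by
      norm_num at h3 ⊢
      linarith
    linarith
  · have hsq := pow_le_pow_left₀ hJ0pos.le hb2 2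
    linarith [hsq, hb3, hb4, hR]
end
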